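/- arXiv:2310.19578 — 4 statements merged into one kernel-verified Lean document; each statement's English description precedes it below -/
import Mathlib

section
/- Fix α ∈ (0,1), a ℤ-grid Λ in ℂ, and φ, ψ : ℕ → (0,∞) with φ(N)/N^{1−α} → +∞ and ψ(N) = (N^{2−α}/φ(N))². Let f : ℂ → ℂ be continuously differentiable with compact support and A > 1 with supp f ⊆ D(0,A). Then there exists an integer N₀, depending only on α, Λ, φ and A, such that for all N ≥ N₀ and all N', N'' ∈ ℕ, the level separated empirical pair correlation measure satisfies ℛ^{α,Λ,lvl}_{N,N',N''}(f) = 0. -/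
open Filter Topology MeasureTheory
open scoped ENNReal

set_option maxHeartbeats 1600000

noncomputable section

/-- The ℤ-lattice generated by `w₁, w₂`. -/
def latSet (w₁ w₂ : ℂ) : Set ℂ := {p : ℂ | ∃ a b : ℤ, p = (a : ℂ) * w₁ + (b : ℂ) * w₂}

/-- The ℤ-grid `z₀ + latSet w₁ w₂`. -/
def gridSet (z₀ w₁ w₂ : ℂ) : Set ℂ := {m : ℂ | ∃ p ∈ latSet w₁ w₂, m = z₀ + p}

/-- The covolume (area of a fundamental parallelogram) of the lattice generated by `w₁, w₂`. -/
def covol (w₁ w₂ : ℂ) : ℝ := |((starRingEnd ℂ) w₁ * w₂).im|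

/-- The representative of `arg z` in `[2πk, 2π(k+1))`. -/
def levelArg (k : ℤ) (z : ℂ) : ℝ :=
  Complex.arg z - 2 * Real.pi * (⌊(Complex.arg z - 2 * Real.pi * k) / (2 * Real.pi)⌋ : ℤ)

/-- The level-`k` `β` power `z^{[β,k]} = |z|^β e^{iβω_k}`. -/
def levelPow (β : ℝ) (k : ℤ) (z : ℂ) : ℂ :=
  ((‖z‖ ^ β : ℝ) : ℂ) * Complex.exp (Complex.I * (β * levelArg k z))

/-- Evaluation on `f` of the level separated empirical pair correlation measure
`ℛ^{α,Λ,lvl}_{N,N',N''}`. -/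
def Rlvl (α : ℝ) (z₀ w₁ w₂ : ℂ) (φ ψ : ℕ → ℝ) (N N' N'' : ℕ) (f : ℂ → ℂ) : ℂ :=
  (((((N' + N'' : ℕ) : ℝ) * ψ N)⁻¹ : ℝ) : ℂ) *
    ∑ k ∈ Finset.Ico (-(N' : ℤ)) ((N'' : ℕ) : ℤ),
      ∑' q : {q : ℂ × ℂ // q.1 ∈ gridSet z₀ w₁ w₂ ∧ q.2 ∈ gridSet z₀ w₁ w₂ ∧ q.1 ≠ q.2 ∧
          0 < ‖q.1‖ ∧ ‖q.1‖ ≤ (N : ℝ) ∧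
          0 < ‖q.2‖ ∧ ‖q.2‖ ≤ (N : ℝ)},
        f (((φ N : ℝ) : ℂ) * (levelPow α k q.1.1 - levelPow α k q.1.2))

/-- The limit density `ρ_{α,Λ⃗,λ}` for `λ ∈ [0,+∞]`. -/
def rhoLim (α : ℝ) (w₁ w₂ : ℂ) (lam : ℝ≥0∞) (z : ℂ) : ℝ :=
  if lam = ⊤ then 0
  else if lam = 0 then Real.pi / (α ^ 2 * (2 - α) * covol w₁ w₂ ^ 2)
  else (α ^ ((2 : ℝ) / (1 - α)) / ((1 - α) * covol w₁ w₂)) *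
      (‖z‖ / lam.toReal) ^ (-(4 - 2 * α) / (1 - α)) *
      ∑' p : {p : ℂ // p ∈ latSet w₁ w₂ ∧
          ‖(p : ℂ)‖ ≤ ‖z‖ / (α * lam.toReal)},
        (‖p.1‖ : ℝ) ^ ((2 : ℝ) / (1 - α))

/-! ### Auxiliary lemmas -/

lemma levelArg_mem (k : ℤ) (z : ℂ) :
    levelArg k z ∈ Set.Ico (2 * Real.pi * k) (2 * Real.pi * (k + 1)) := by
  unfold levelArg
  have h2π : (0:ℝ) < 2 * Real.pi := Real.two_pi_pos
  set a := Complex.arg z with ha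
  set j := ⌊(a - 2 * Real.pi * k) / (2 * Real.pi)⌋ with hj
  have h1 : (j:ℝ) * (2 * Real.pi) ≤ a - 2 * Real.pi * k := by
    rw [← le_div_iff₀ h2π]; exact Int.floor_le _
  have h2 : a - 2 * Real.pi * k < ((j:ℝ) + 1) * (2 * Real.pi) := by
    rw [← div_lt_iff₀ h2π]; exact Int.lt_floor_add_one _
  constructor
  · nlinarith
  · nlinarith

lemma abs_mul_exp_levelArg (k : ℤ) (z : ℂ) :
    ((‖z‖ : ℝ) : ℂ) * Complex.exp ((levelArg k z : ℝ) * Complex.I) = z := by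
  unfold levelArg
  set j := ⌊(Complex.arg z - 2 * Real.pi * k) / (2 * Real.pi)⌋ with hj
  have : ((Complex.arg z - 2 * Real.pi * (j:ℝ) : ℝ) : ℂ) * Complex.I
      = (Complex.arg z : ℂ) * Complex.I - (j:ℂ) * (2 * Real.pi * Complex.I) := by
    push_cast; ring
  rw [this, Complex.exp_sub, Complex.exp_int_mul_two_pi_mul_I, div_one,
    Complex.norm_mul_exp_arg_mul_I]

lemma toIocMod_abs_ge {α : ℝ} (hα0 : 0 < α) (hα1 : α < 1) {θ : ℝ}
    (hθ : |θ| ≤ 2 * Real.pi * α) :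
    (1 - α) * |θ| ≤ |toIocMod Real.two_pi_pos (-Real.pi) θ| := by
  have hπ := Real.pi_pos
  have hθ1 := abs_le.1 hθ
  rcases le_or_gt θ (-Real.pi) with h1 | h1
  · have hm : toIocMod Real.two_pi_pos (-Real.pi) θ = θ + 2 * Real.pi := by
      have h := toIocMod_add_zsmul Real.two_pi_pos (-Real.pi) θ 1
      rw [one_zsmul] at h
      rw [← h, (toIocMod_eq_self Real.two_pi_pos).2]
      constructor
      · nlinarith [hθ1.1]
      · linarith
    rw [hm, abs_of_nonpos (by linarith : θ ≤ 0), abs_of_nonneg (by nlinarith [hθ1.1])]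
    nlinarith [hθ1.1, sq_nonneg (1 - α)]
  · rcases le_or_gt θ Real.pi with h2 | h2
    · rw [(toIocMod_eq_self Real.two_pi_pos).2 ⟨h1, by linarith⟩]
      nlinarith [abs_nonneg θ]
    · have hm : toIocMod Real.two_pi_pos (-Real.pi) θ = θ - 2 * Real.pi := by
        have h := toIocMod_sub_zsmul Real.two_pi_pos (-Real.pi) θ 1
        rw [one_zsmul] at h
        rw [← h, (toIocMod_eq_self Real.two_pi_pos).2]
        constructor
        · linarith
        · nlinarith [hθ1.2]
      rw [hm, abs_of_nonneg (by linarith : 0 ≤ θ), abs_of_nonpos (by nlinarith [hθ1.2])]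
      nlinarith [hθ1.2, sq_nonneg (1 - α)]

lemma chord_upper (x y : ℝ) :
    ‖Complex.exp ((x:ℂ) * Complex.I) - Complex.exp ((y:ℂ) * Complex.I)‖ ≤ |x - y| := by
  have h := Complex.norm_sub_le_angle (x := Complex.exp ((x:ℂ) * Complex.I))
    (y := Complex.exp ((y:ℂ) * Complex.I)) (by simp) (by simp)
  rw [Complex.angle_exp_exp] at h
  refine h.trans ?_
  set m := toIocMod Real.two_pi_pos (-Real.pi) (x - y) with hm
  have hmem := toIocMod_mem_Ioc Real.two_pi_pos (-Real.pi) (x - y)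
  rcases lt_or_ge |x - y| Real.pi with h2 | h2
  · have := abs_lt.1 h2
    rw [hm, (toIocMod_eq_self Real.two_pi_pos).2 ⟨this.1, by linarith [this.2]⟩]
  · have : |m| ≤ Real.pi := abs_le.2 ⟨by linarith [hmem.1], by linarith [hmem.2, Real.pi_pos]⟩
    linarith

lemma chord_lower {α : ℝ} (hα0 : 0 < α) (hα1 : α < 1) {x y : ℝ}
    (h : |x - y| ≤ 2 * Real.pi * α) :
    2 / Real.pi * ((1 - α) * |x - y|) ≤
      ‖Complex.exp ((x:ℂ) * Complex.I) - Complex.exp ((y:ℂ) * Complex.I)‖ := by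
  have h2 := Complex.mul_angle_le_norm_sub (x := Complex.exp ((x:ℂ) * Complex.I))
    (y := Complex.exp ((y:ℂ) * Complex.I)) (by simp) (by simp)
  rw [Complex.angle_exp_exp] at h2
  refine le_trans ?_ h2
  have := toIocMod_abs_ge hα0 hα1 h
  have hπ := Real.pi_pos
  gcongr

lemma levelPow_eq (β : ℝ) (k : ℤ) (z : ℂ) :
    levelPow β k z = ((‖z‖ ^ β : ℝ) : ℂ) *
      Complex.exp (((β * levelArg k z : ℝ) : ℂ) * Complex.I) := by
  unfold levelPow
  norm_cast
  rw [mul_comm Complex.I]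

lemma key {α : ℝ} (hα0 : 0 < α) (hα1 : α < 1) (k : ℤ) {N : ℝ} (hN : 1 ≤ N)
    {z w : ℂ} (hz : 0 < ‖z‖) (hw : 0 < ‖w‖)
    (hzN : ‖z‖ ≤ N) (hwN : ‖w‖ ≤ N)
    (hle : ‖w‖ ≤ ‖z‖) :
    ‖z - w‖ ≤ (1/α + Real.pi/(α*(1-α))) * N ^ (1-α) *
      ‖levelPow α k z - levelPow α k w‖ := by
  have hπ := Real.pi_pos
  have hN0 : (0:ℝ) < N := by linarith
  set r := ‖z‖ with hr
  set s := ‖w‖ with hs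
  set u := levelArg k z with hu
  set v := levelArg k w with hv
  set E := ‖levelPow α k z - levelPow α k w‖ with hE
  have hEnn : 0 ≤ E := norm_nonneg _
  have humem := levelArg_mem k z
  have hvmem := levelArg_mem k w
  rw [Set.mem_Ico] at humem hvmem
  have huv : |u - v| ≤ 2 * Real.pi := by
    rw [abs_le]
    constructor <;> nlinarith [humem.1, humem.2, hvmem.1, hvmem.2]
  -- abs of levelPow
  have habsPow : ∀ (ζ : ℂ), ‖levelPow α k ζ‖ = ‖ζ‖ ^ α := by
    intro ζ
    rw [levelPow_eq, norm_mul, Complex.norm_real, Real.norm_eq_abs, Complex.norm_exp_ofReal_mul_I,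
      mul_one, abs_of_nonneg (Real.rpow_nonneg (norm_nonneg ζ) α)]
  have hE1 : r ^ α - s ^ α ≤ E := by
    have h := norm_sub_norm_le (levelPow α k z) (levelPow α k w)
    simpa [habsPow] using h
  have hrsPow : s ^ α ≤ r ^ α := Real.rpow_le_rpow hw.le hle hα0.le
  -- chord bound on powered angles
  set cU := Complex.exp (((α * u : ℝ) : ℂ) * Complex.I) with hcU
  set cV := Complex.exp (((α * v : ℝ) : ℂ) * Complex.I) with hcV
  have hαuv : |α * u - α * v| ≤ 2 * Real.pi * α := by
    rw [← mul_sub, abs_mul, abs_of_nonneg hα0.le]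
    nlinarith
  have hcl : 2 / Real.pi * ((1 - α) * (α * |u - v|)) ≤ ‖cU - cV‖ := by
    have h := chord_lower hα0 hα1 hαuv
    rwa [← mul_sub, abs_mul, abs_of_nonneg hα0.le] at h
  have htri : s ^ α * ‖cU - cV‖ ≤ 2 * E := by
    have e1 : ((s^α : ℝ):ℂ) * (cU - cV)
        = (((s^α:ℝ):ℂ) - ((r^α:ℝ):ℂ)) * cU + (levelPow α k z - levelPow α k w) := by
      rw [levelPow_eq, levelPow_eq, ← hu, ← hv, ← hr, ← hs, ← hcU, ← hcV]; ring
    calc s ^ α * ‖cU - cV‖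
        = ‖((s^α:ℝ):ℂ) * (cU - cV)‖ := by
          rw [norm_mul, Complex.norm_real, Real.norm_eq_abs, abs_of_nonneg (Real.rpow_nonneg hw.le α)]
      _ = ‖(((s^α:ℝ):ℂ) - ((r^α:ℝ):ℂ)) * cU + (levelPow α k z - levelPow α k w)‖ := by
          rw [e1]
      _ ≤ ‖(((s^α:ℝ):ℂ) - ((r^α:ℝ):ℂ)) * cU‖ + E := norm_add_le _ _
      _ = |s ^ α - r ^ α| + E := by
          rw [norm_mul, hcU, Complex.norm_exp_ofReal_mul_I, mul_one, ← Complex.ofReal_sub,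
            Complex.norm_real, Real.norm_eq_abs]
      _ ≤ 2 * E := by
          rw [abs_sub_comm, abs_of_nonneg (sub_nonneg.2 hrsPow)]
          linarith
  have hE2 : s ^ α * |u - v| ≤ Real.pi / (α * (1 - α)) * E := by
    have step : s ^ α * (2 / Real.pi * ((1 - α) * (α * |u - v|))) ≤ 2 * E :=
      le_trans (mul_le_mul_of_nonneg_left hcl (Real.rpow_nonneg hw.le α)) htri
    have step2 : 2 * ((1 - α) * (α * (s ^ α * |u - v|))) ≤ Real.pi * (2 * E) := by
      have h := mul_le_mul_of_nonneg_left step hπ.le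
      calc 2 * ((1 - α) * (α * (s ^ α * |u - v|)))
          = Real.pi * (s ^ α * (2 / Real.pi * ((1 - α) * (α * |u - v|)))) := by
            field_simp
        _ ≤ Real.pi * (2 * E) := h
    rw [div_mul_eq_mul_div, le_div_iff₀ (mul_pos hα0 (by linarith : (0:ℝ) < 1 - α))]
    nlinarith [step2]
  -- r - s bound through AM-GM
  have hNN : N ^ (1-α) * N ^ (α-1) = 1 := by
    rw [← Real.rpow_add hN0]; norm_num
  have hrs : α * (r - s) * N ^ (α-1) ≤ r ^ α - s ^ α := by
    have ht : (s / r) ^ α ≤ (1 - α) + α * (s / r) := by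
      have h := Real.geom_mean_le_arith_mean2_weighted (by linarith : (0:ℝ) ≤ 1 - α) hα0.le
        zero_le_one (div_nonneg hw.le hz.le) (by ring)
      simpa using h
    have hdiv : (s / r) ^ α = s ^ α / r ^ α := Real.div_rpow hw.le hz.le α
    rw [hdiv] at ht
    have hrα : (0:ℝ) < r ^ α := Real.rpow_pos_of_pos hz α
    have ht2 : s ^ α ≤ ((1 - α) + α * (s / r)) * r ^ α := (div_le_iff₀ hrα).1 ht
    have hre : r ^ (α - 1) = r ^ α / r := by
      rw [Real.rpow_sub hz, Real.rpow_one]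
    have hNr : N ^ (α-1) ≤ r ^ (α-1) := Real.rpow_le_rpow_of_nonpos hz hzN (by linarith)
    have h3 : α * (r - s) * N ^ (α-1) ≤ α * (r - s) * r ^ (α-1) :=
      mul_le_mul_of_nonneg_left hNr (by nlinarith : 0 ≤ α * (r - s))
    refine h3.trans ?_
    rw [hre]
    have hident : ((1 - α) + α * (s / r)) * r ^ α = r ^ α - α * (r - s) * (r ^ α / r) := by
      field_simp
      ring
    rw [hident] at ht2
    linarith
  -- split s
  have hs_split : s = s ^ (1-α) * s ^ α := by
    rw [← Real.rpow_add hw]; norm_num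
  have hsN' : s ^ (1-α) ≤ N ^ (1-α) := Real.rpow_le_rpow hw.le hwN (by linarith)
  -- decomposition of z - w
  have hD : ‖z - w‖ ≤ (r - s) + s * |u - v| := by
    set eU := Complex.exp ((u : ℂ) * Complex.I) with heU
    set eV := Complex.exp ((v : ℂ) * Complex.I) with heV
    have hz' : z = ((r:ℝ):ℂ) * eU := (abs_mul_exp_levelArg k z).symm
    have hw' : w = ((s:ℝ):ℂ) * eV := (abs_mul_exp_levelArg k w).symm
    calc ‖z - w‖
        = ‖(((r:ℝ):ℂ) - ((s:ℝ):ℂ)) * eU + ((s:ℝ):ℂ) * (eU - eV)‖ := by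
          rw [hz', hw']; ring_nf
      _ ≤ ‖(((r:ℝ):ℂ) - ((s:ℝ):ℂ)) * eU‖ + ‖((s:ℝ):ℂ) * (eU - eV)‖ :=
          norm_add_le _ _
      _ ≤ (r - s) + s * |u - v| := by
          rw [norm_mul, norm_mul, heU, Complex.norm_exp_ofReal_mul_I, mul_one, ← Complex.ofReal_sub,
            Complex.norm_real, Real.norm_eq_abs, Complex.norm_real, Real.norm_eq_abs, abs_of_nonneg (sub_nonneg.2 hle),
            abs_of_nonneg hw.le]
          have := chord_upper u v
          nlinarith [hw.le]
  -- combine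
  have hA1 : α * (r - s) ≤ N ^ (1-α) * E := by
    have h := mul_le_mul_of_nonneg_left (hrs.trans hE1) (Real.rpow_nonneg hN0.le (1-α))
    calc α * (r - s) = N ^ (1-α) * (α * (r - s) * N ^ (α-1)) := by
          rw [show N ^ (1-α) * (α * (r - s) * N ^ (α-1)) = (α * (r - s)) * (N ^ (1-α) * N ^ (α-1))
            from by ring, hNN, mul_one]
      _ ≤ N ^ (1-α) * E := h
  have hA1' : r - s ≤ N ^ (1-α) * E / α := (le_div_iff₀' hα0).2 hA1
  have hA2 : s * |u - v| ≤ N ^ (1-α) * (Real.pi / (α * (1 - α)) * E) := by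
    calc s * |u - v| = s ^ (1-α) * (s ^ α * |u - v|) := by rw [← mul_assoc, ← hs_split]
      _ ≤ N ^ (1-α) * (Real.pi / (α * (1 - α)) * E) := by
          apply mul_le_mul hsN' hE2 (by positivity) (by positivity)
  calc ‖z - w‖ ≤ (r - s) + s * |u - v| := hD
    _ ≤ N ^ (1-α) * E / α + N ^ (1-α) * (Real.pi / (α * (1 - α)) * E) := add_le_add hA1' hA2
    _ = (1/α + Real.pi/(α*(1-α))) * N ^ (1-α) * E := by
        field_simp

lemma lat_delta (w₁ w₂ : ℂ) (hindep : LinearIndependent ℝ ![w₁, w₂]) :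
    ∃ δ : ℝ, 0 < δ ∧ ∀ p ∈ latSet w₁ w₂, p ≠ 0 → δ ≤ ‖p‖ := by
  have hcard : Fintype.card (Fin 2) = Module.finrank ℝ ℂ := by
    simp [Complex.finrank_real_complex]
  let B := basisOfLinearIndependentOfCardEqFinrank hindep hcard
  have hBc : ⇑B = ![w₁, w₂] := coe_basisOfLinearIndependentOfCardEqFinrank _ _
  let L : ℂ →L[ℝ] (Fin 2 → ℝ) :=
    LinearMap.toContinuousLinearMap (B.equivFun : ℂ →ₗ[ℝ] (Fin 2 → ℝ))
  refine ⟨(‖L‖ + 1)⁻¹, by positivity, ?_⟩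
  rintro p ⟨a, b, rfl⟩ hp
  set q : ℂ := (a : ℂ) * w₁ + (b : ℂ) * w₂ with hq
  have hrep : B.equivFun q = ![(a:ℝ), (b:ℝ)] := by
    have h1 : q = B.equivFun.symm ![(a:ℝ), (b:ℝ)] := by
      rw [Module.Basis.equivFun_symm_apply, Fin.sum_univ_two]
      simp [hBc, Complex.real_smul, hq]
    rw [h1, LinearEquiv.apply_symm_apply]
  have h1 : (1:ℝ) ≤ ‖B.equivFun q‖ := by
    rcases show a ≠ 0 ∨ b ≠ 0 by
      by_contra h
      push_neg at h
      exact hp (by simp [hq, h.1, h.2]) with h | h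
    · calc (1:ℝ) ≤ |(a:ℝ)| := by exact_mod_cast Int.one_le_abs h
        _ = ‖(B.equivFun q) 0‖ := by rw [hrep]; simp [Real.norm_eq_abs]
        _ ≤ ‖B.equivFun q‖ := norm_le_pi_norm _ 0
    · calc (1:ℝ) ≤ |(b:ℝ)| := by exact_mod_cast Int.one_le_abs h
        _ = ‖(B.equivFun q) 1‖ := by rw [hrep]; simp [Real.norm_eq_abs]
        _ ≤ ‖B.equivFun q‖ := norm_le_pi_norm _ 1
  have h2 : ‖B.equivFun q‖ ≤ ‖L‖ * ‖q‖ := L.le_opNorm q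
  have h3 : (1:ℝ) ≤ (‖L‖ + 1) * ‖q‖ := by
    have hq0 : 0 ≤ ‖q‖ := norm_nonneg q
    nlinarith
  have hpos : (0:ℝ) < ‖L‖ + 1 := by positivity
  rw [inv_le_iff_one_le_mul₀ hpos]
  linarith [h3]

/-- In the regime `φ(N)/N^{1−α} → +∞`, the level separated empirical pair correlation
measures eventually vanish on every fixed test function, with a threshold `N₀` depending
only on `α`, `Λ`, `φ` and `A`. -/
theorem stmt_7 (α : ℝ) (hα : 0 < α ∧ α < 1) (z₀ w₁ w₂ : ℂ)
    (hindep : LinearIndependent ℝ ![w₁, w₂])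
    (φ ψ : ℕ → ℝ) (hφpos : ∀ N, 0 < φ N)
    (hlam : Tendsto (fun N : ℕ => φ N / (N : ℝ) ^ (1 - α)) atTop atTop)
    (hψ : ∀ N : ℕ, 1 ≤ N → ψ N = ((N : ℝ) ^ (2 - α) / φ N) ^ 2) :
    ∀ A : ℝ, 1 < A → ∃ N₀ : ℕ, ∀ f : ℂ → ℂ,
      ContDiff ℝ 1 f → HasCompactSupport f → tsupport f ⊆ Metric.ball 0 A →
      ∀ N : ℕ, N₀ ≤ N → ∀ N' N'' : ℕ,
        Rlvl α z₀ w₁ w₂ φ ψ N N' N'' f = 0 := by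
  obtain ⟨hα0, hα1⟩ := hα
  intro A hA
  obtain ⟨δ, hδ, hδlat⟩ := lat_delta w₁ w₂ hindep
  set C : ℝ := 1/α + Real.pi/(α*(1-α)) with hCdef
  have hπ := Real.pi_pos
  have hCpos : 0 < C := by
    have h1 : 0 < α*(1-α) := mul_pos hα0 (by linarith)
    positivity
  obtain ⟨N₀, hN₀⟩ := Filter.eventually_atTop.1 (hlam.eventually_ge_atTop (A*C/δ))
  refine ⟨max N₀ 1, ?_⟩
  intro f hf1 hf2 hsupp N hN N' N''
  have hN1 : 1 ≤ N := le_trans (le_max_right _ _) hN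
  have hNr1 : (1:ℝ) ≤ (N:ℝ) := by exact_mod_cast hN1
  have hNpow : (0:ℝ) < (N:ℝ)^(1-α) := Real.rpow_pos_of_pos (by linarith) _
  have hφN : A*C/δ ≤ φ N / (N:ℝ)^(1-α) := hN₀ N (le_trans (le_max_left _ _) hN)
  rw [div_le_div_iff₀ hδ hNpow] at hφN
  unfold Rlvl
  rw [Finset.sum_congr rfl (fun k _ => ?_), Finset.sum_const_zero, mul_zero]
  refine (tsum_congr fun q => ?_).trans tsum_zero
  obtain ⟨⟨n, m⟩, hn, hm, hnm, hn0, hnN, hm0, hmN⟩ := q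
  apply image_eq_zero_of_notMem_tsupport
  intro hmem
  have hball := hsupp hmem
  rw [Metric.mem_ball, dist_zero_right] at hball
  have hED : ‖n - m‖ ≤
      C * (N:ℝ)^(1-α) * ‖levelPow α k n - levelPow α k m‖ := by
    rcases le_total (‖m‖) (‖n‖) with h | h
    · exact key hα0 hα1 k hNr1 hn0 hm0 hnN hmN h
    · have h2 := key hα0 hα1 k hNr1 hm0 hn0 hmN hnN h
      rwa [norm_sub_rev, norm_sub_rev (levelPow α k m)] at h2
  have hlat : n - m ∈ latSet w₁ w₂ := by
    obtain ⟨p, ⟨a, b, hp⟩, hnp⟩ := hn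
    obtain ⟨p', ⟨a', b', hp'⟩, hmp⟩ := hm
    have hnp' : n = z₀ + p := hnp
    have hmp' : m = z₀ + p' := hmp
    refine ⟨a - a', b - b', ?_⟩
    rw [hnp', hmp', hp, hp']
    push_cast
    ring
  have hδle : δ ≤ ‖n - m‖ := hδlat _ hlat (sub_ne_zero.2 hnm)
  have hfinal : A ≤ ‖((φ N:ℝ):ℂ) * (levelPow α k n - levelPow α k m)‖ := by
    rw [norm_mul, Complex.norm_real, Real.norm_eq_abs, abs_of_pos (hφpos N)]
    set E := ‖levelPow α k n - levelPow α k m‖ with hEdef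
    have h1 : δ ≤ C*(N:ℝ)^(1-α)*E := le_trans hδle hED
    have h2 : A*C*(N:ℝ)^(1-α) ≤ φ N * (C*(N:ℝ)^(1-α)*E) :=
      le_trans hφN (mul_le_mul_of_nonneg_left h1 (hφpos N).le)
    have h3 : A*(C*(N:ℝ)^(1-α)) ≤ (φ N * E)*(C*(N:ℝ)^(1-α)) := by nlinarith [h2]
    exact le_of_mul_le_mul_right h3 (by positivity)
  linarith [hball, hfinal]
end
end

section
/- Let Λ be a ℤ-grid in ℂ with underlying ℤ-lattice Λ⃗, let g : [0,∞) → [0,∞) be a nonnegative piecewise continuous function, and set L_g = {x + iy : x ≥ 0, y ∈ ℝ, |y| ≤ g(x)}. Then for every N ∈ ℕ, Card( Λ ∩ D(0,N) ∩ L_g ) ≤ 4 Σ_{x=1}^{N} (1 + diam(Λ⃗)) (max_{[x−1,x]} g + diam(Λ⃗)) / covol(Λ⃗). -/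
open Filter Topology MeasureTheory

noncomputable section

/-- The closed fundamental parallelogram spanned by `v₁, v₂` (based at `0`). -/
def para (v₁ v₂ : ℂ) : Set ℂ :=
  {z : ℂ | ∃ s t : ℝ, s ∈ Set.Icc (0 : ℝ) 1 ∧ t ∈ Set.Icc (0 : ℝ) 1 ∧ z = s • v₁ + t • v₂}

/-- The minimal diameter over all closed fundamental parallelograms of the lattice
generated by `w₁, w₂`. -/
def fundDiam (w₁ w₂ : ℂ) : ℝ :=
  sInf {d : ℝ | ∃ v₁ v₂ : ℂ, latSet v₁ v₂ = latSet w₁ w₂ ∧ d = Metric.diam (para v₁ v₂)}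

/-- `g` is piecewise continuous: on every compact interval it is bounded and continuous
outside a finite set of points. -/
def PiecewiseCont (g : ℝ → ℝ) : Prop :=
  ∀ a b : ℝ, BddAbove (g '' Set.Icc a b) ∧
    ∃ s : Finset ℝ, ∀ x ∈ Set.Icc a b, x ∉ s → ContinuousAt g x

namespace Aux13

def omg (u v : ℂ) : ℝ := u.re * v.im - u.im * v.re

lemma covol_eq (u v : ℂ) : covol u v = |omg u v| := by
  unfold covol omg
  congr 1
  simp [Complex.mul_im]
  ring

lemma abs_omg_le (u v : ℂ) : |omg u v| ≤ ‖u‖ * ‖v‖ := by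
  have h : omg u v = ((starRingEnd ℂ) u * v).im := by
    simp [omg, Complex.mul_im]; ring
  rw [h]
  calc |((starRingEnd ℂ) u * v).im| ≤ ‖(starRingEnd ℂ) u * v‖ :=
        Complex.abs_im_le_norm _
    _ = ‖u‖ * ‖v‖ := by simp

lemma omg_ne_zero {w₁ w₂ : ℂ} (h : LinearIndependent ℝ ![w₁, w₂]) : omg w₁ w₂ ≠ 0 := by
  rw [linearIndependent_fin2] at h
  simp only [Matrix.cons_val_one, Matrix.head_cons, Matrix.cons_val_zero] at h
  obtain ⟨h2, h1⟩ := h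
  intro h0
  simp only [omg] at h0
  have hn : w₂.re ^ 2 + w₂.im ^ 2 ≠ 0 := by
    intro hc
    apply h2
    have h1' : w₂.re = 0 := by nlinarith [sq_nonneg w₂.re, sq_nonneg w₂.im]
    have h2' : w₂.im = 0 := by nlinarith [sq_nonneg w₂.re, sq_nonneg w₂.im]
    apply Complex.ext <;> simp [h1', h2']
  apply h1 ((w₁.re * w₂.re + w₁.im * w₂.im) / (w₂.re ^ 2 + w₂.im ^ 2))
  apply Complex.ext
  · simp only [Complex.real_smul, Complex.mul_re, Complex.ofReal_re, Complex.ofReal_im]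
    field_simp
    linear_combination (-w₂.im) * h0
  · simp only [Complex.real_smul, Complex.mul_im, Complex.ofReal_re, Complex.ofReal_im]
    field_simp
    linear_combination w₂.re * h0

lemma coords_unique {v₁ v₂ : ℂ} (hω : omg v₁ v₂ ≠ 0) {s t s' t' : ℝ}
    (h : (s : ℂ) * v₁ + (t : ℂ) * v₂ = (s' : ℂ) * v₁ + (t' : ℂ) * v₂) : s = s' ∧ t = t' := by
  have hre := congrArg Complex.re h
  have him := congrArg Complex.im h
  simp only [Complex.add_re, Complex.add_im, Complex.mul_re, Complex.mul_im,
    Complex.ofReal_re, Complex.ofReal_im] at hre him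
  unfold omg at hω
  constructor
  · have : (s - s') * (v₁.re * v₂.im - v₁.im * v₂.re) = 0 := by
      linear_combination v₂.im * hre - v₂.re * him
    rcases mul_eq_zero.1 this with h' | h'
    · linarith
    · exact absurd h' hω
  · have : (t - t') * (v₁.re * v₂.im - v₁.im * v₂.re) = 0 := by
      linear_combination v₁.re * him - v₁.im * hre
    rcases mul_eq_zero.1 this with h' | h'
    · linarith
    · exact absurd h' hω

lemma omg_int_comb {v₁ v₂ w₁ w₂ : ℂ} (h : latSet w₁ w₂ ⊆ latSet v₁ v₂) :
    ∃ D : ℤ, omg w₁ w₂ = (D : ℝ) * omg v₁ v₂ := by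
  have hm1 : w₁ ∈ latSet w₁ w₂ := ⟨1, 0, by simp⟩
  have hm2 : w₂ ∈ latSet w₁ w₂ := ⟨0, 1, by simp⟩
  obtain ⟨a, b, hw1⟩ := h hm1
  obtain ⟨c, d, hw2⟩ := h hm2
  refine ⟨a * d - b * c, ?_⟩
  subst hw1 hw2
  simp only [omg, Complex.add_re, Complex.add_im, Complex.mul_re, Complex.mul_im,
    Complex.intCast_re, Complex.intCast_im]
  push_cast
  ring

lemma covol_invariant {v₁ v₂ w₁ w₂ : ℂ} (h : latSet v₁ v₂ = latSet w₁ w₂)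
    (hw : omg w₁ w₂ ≠ 0) : |omg v₁ v₂| = |omg w₁ w₂| ∧ omg v₁ v₂ ≠ 0 := by
  obtain ⟨D, hD⟩ := omg_int_comb h.ge
  obtain ⟨D', hD'⟩ := omg_int_comb h.le
  have hunit : D * D' = 1 := by
    have h2 : ((D : ℝ) * D' - 1) * omg w₁ w₂ = 0 := by
      have hthis : omg w₁ w₂ = (D : ℝ) * ((D' : ℝ) * omg w₁ w₂) := by rw [← hD']; exact hD
      linear_combination -hthis
    rcases mul_eq_zero.1 h2 with h' | h'
    · have h3 : ((D * D' : ℤ) : ℝ) = 1 := by push_cast; linarith [sub_eq_zero.1 h']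
      exact_mod_cast h3
    · exact absurd h' hw
  have hD1 : D = 1 ∨ D = -1 := Int.isUnit_iff.1 (IsUnit.of_mul_eq_one _ hunit)
  constructor
  · rw [hD]
    rcases hD1 with h1 | h1 <;> rw [h1] <;> simp [abs_mul]
  · intro hc
    rw [hD, hc, mul_zero] at hw
    exact hw rfl


/-- The linear map sending `1 ↦ v₁`, `I ↦ v₂`. -/
def lmap (v₁ v₂ : ℂ) : ℂ →ₗ[ℝ] ℂ :=
  (Complex.reLm.smulRight v₁) + (Complex.imLm.smulRight v₂)

lemma lmap_apply (v₁ v₂ z : ℂ) : lmap v₁ v₂ z = z.re • v₁ + z.im • v₂ := rfl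

lemma lmap_det (v₁ v₂ : ℂ) : LinearMap.det (lmap v₁ v₂) = omg v₁ v₂ := by
  rw [← LinearMap.det_toMatrix Complex.basisOneI, Matrix.det_fin_two]
  simp [LinearMap.toMatrix_apply, lmap_apply, Complex.coe_basisOneI, omg]
  ring

def sq01 : Set ℂ := {z : ℂ | z.re ∈ Set.Ico (0 : ℝ) 1 ∧ z.im ∈ Set.Ico (0 : ℝ) 1}

lemma sq01_eq : sq01 = Complex.measurableEquivRealProd ⁻¹'
    (Set.Ico (0 : ℝ) 1 ×ˢ Set.Ico (0 : ℝ) 1) := by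
  ext z
  simp [sq01, Set.mem_prod]

lemma sq01_measurable : MeasurableSet sq01 := by
  rw [sq01_eq]
  exact Complex.measurableEquivRealProd.measurable
    ((measurableSet_Ico).prod measurableSet_Ico)

lemma volume_sq01 : volume sq01 = 1 := by
  rw [sq01_eq, Complex.volume_preserving_equiv_real_prod.measure_preimage
    ((measurableSet_Ico.prod measurableSet_Ico).nullMeasurableSet)]
  rw [MeasureTheory.Measure.volume_eq_prod, MeasureTheory.Measure.prod_prod]
  simp

/-- a general rectangle volume computation -/
lemma volume_rect (a b c d : ℝ) :
    volume {z : ℂ | z.re ∈ Set.Icc a b ∧ z.im ∈ Set.Icc c d} =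
      ENNReal.ofReal (b - a) * ENNReal.ofReal (d - c) := by
  have : {z : ℂ | z.re ∈ Set.Icc a b ∧ z.im ∈ Set.Icc c d} =
      Complex.measurableEquivRealProd ⁻¹' (Set.Icc a b ×ˢ Set.Icc c d) := by
    ext z; simp [Set.mem_prod]; tauto
  rw [this, Complex.volume_preserving_equiv_real_prod.measure_preimage
    ((measurableSet_Icc.prod measurableSet_Icc).nullMeasurableSet)]
  rw [MeasureTheory.Measure.volume_eq_prod, MeasureTheory.Measure.prod_prod]
  simp [Real.volume_Icc]

def paraHO (v₁ v₂ : ℂ) : Set ℂ := lmap v₁ v₂ '' sq01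

lemma mem_paraHO {v₁ v₂ z : ℂ} :
    z ∈ paraHO v₁ v₂ ↔ ∃ s t : ℝ, s ∈ Set.Ico (0 : ℝ) 1 ∧ t ∈ Set.Ico (0 : ℝ) 1 ∧
      z = (s : ℂ) * v₁ + (t : ℂ) * v₂ := by
  constructor
  · rintro ⟨w, ⟨hs, ht⟩, rfl⟩
    exact ⟨w.re, w.im, hs, ht, by rw [lmap_apply]; simp [Complex.real_smul]⟩
  · rintro ⟨s, t, hs, ht, rfl⟩
    refine ⟨⟨s, t⟩, ⟨hs, ht⟩, ?_⟩
    rw [lmap_apply]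
    norm_num [Complex.real_smul]

lemma volume_paraHO (v₁ v₂ : ℂ) : volume (paraHO v₁ v₂) = ENNReal.ofReal |omg v₁ v₂| := by
  rw [paraHO, MeasureTheory.Measure.addHaar_image_linearMap, lmap_det, volume_sq01, mul_one]

lemma paraHO_measurable {v₁ v₂ : ℂ} (hω : omg v₁ v₂ ≠ 0) : MeasurableSet (paraHO v₁ v₂) := by
  have hdet : LinearMap.det (lmap v₁ v₂) ≠ 0 := by rw [lmap_det]; exact hω
  let e := ((lmap v₁ v₂).equivOfDetNeZero hdet).toContinuousLinearEquiv
  have : paraHO v₁ v₂ = e.toHomeomorph.toMeasurableEquiv '' sq01 := rfl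
  rw [this]
  exact e.toHomeomorph.toMeasurableEquiv.measurableSet_image.2 sq01_measurable

lemma paraHO_subset_para (v₁ v₂ : ℂ) : paraHO v₁ v₂ ⊆ para v₁ v₂ := by
  rintro z hz
  obtain ⟨s, t, hs, ht, rfl⟩ := mem_paraHO.1 hz
  exact ⟨s, t, ⟨hs.1, hs.2.le⟩, ⟨ht.1, ht.2.le⟩, by simp [Complex.real_smul]⟩

lemma para_bounded (v₁ v₂ : ℂ) : Bornology.IsBounded (para v₁ v₂) := by
  apply (Metric.isBounded_closedBall (x := (0 : ℂ)) (r := ‖v₁‖ + ‖v₂‖)).subset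
  rintro z ⟨s, t, hs, ht, rfl⟩
  simp only [Metric.mem_closedBall, Complex.dist_eq, sub_zero]
  calc ‖s • v₁ + t • v₂‖ ≤ ‖s • v₁‖ + ‖t • v₂‖ :=
        norm_add_le _ _
    _ = |s| * ‖v₁‖ + |t| * ‖v₂‖ := by
        simp [Complex.real_smul, Complex.norm_real]
    _ ≤ 1 * ‖v₁‖ + 1 * ‖v₂‖ := by
        gcongr
        · exact abs_le.2 ⟨by linarith [hs.1], hs.2⟩
        · exact abs_le.2 ⟨by linarith [ht.1], ht.2⟩
    _ = ‖v₁‖ + ‖v₂‖ := by ring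

lemma abs_le_diam_of_mem_para {v₁ v₂ p : ℂ} (hp : p ∈ para v₁ v₂) :
    ‖p‖ ≤ Metric.diam (para v₁ v₂) := by
  have h0 : (0 : ℂ) ∈ para v₁ v₂ := ⟨0, 0, by norm_num, by norm_num, by simp⟩
  have := Metric.dist_le_diam_of_mem (para_bounded v₁ v₂) hp h0
  simpa [Complex.dist_eq] using this


/-- the translate of the half-open parallelogram at `z` -/
def trans (v₁ v₂ z : ℂ) : Set ℂ := (fun u => z + u) '' paraHO v₁ v₂

lemma trans_measurable {v₁ v₂ : ℂ} (hω : omg v₁ v₂ ≠ 0) (z : ℂ) :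
    MeasurableSet (trans v₁ v₂ z) := by
  have : trans v₁ v₂ z = (Homeomorph.addLeft z).toMeasurableEquiv '' paraHO v₁ v₂ := rfl
  rw [this]
  exact (Homeomorph.addLeft z).toMeasurableEquiv.measurableSet_image.2 (paraHO_measurable hω)

lemma volume_trans (v₁ v₂ z : ℂ) : volume (trans v₁ v₂ z) = ENNReal.ofReal |omg v₁ v₂| := by
  rw [trans, Set.image_add_left, measure_preimage_add, volume_paraHO]

lemma grid_mem_iff {z₀ v₁ v₂ z : ℂ} :
    z ∈ gridSet z₀ v₁ v₂ ↔ ∃ a b : ℤ, z = z₀ + ((a : ℂ) * v₁ + (b : ℂ) * v₂) := by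
  constructor
  · rintro ⟨p, ⟨a, b, rfl⟩, rfl⟩; exact ⟨a, b, rfl⟩
  · rintro ⟨a, b, rfl⟩; exact ⟨_, ⟨a, b, rfl⟩, rfl⟩

lemma trans_disjoint {z₀ v₁ v₂ : ℂ} (hω : omg v₁ v₂ ≠ 0) {z z' : ℂ}
    (hz : z ∈ gridSet z₀ v₁ v₂) (hz' : z' ∈ gridSet z₀ v₁ v₂) (hne : z ≠ z') :
    Disjoint (trans v₁ v₂ z) (trans v₁ v₂ z') := by
  rw [Set.disjoint_left]
  rintro u hu hu'
  obtain ⟨p, hp, hup⟩ := hu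
  obtain ⟨p', hp', hup'⟩ := hu'
  obtain ⟨s, t, hs, ht, rfl⟩ := mem_paraHO.1 hp
  obtain ⟨s', t', hs', ht', rfl⟩ := mem_paraHO.1 hp'
  obtain ⟨a, b, rfl⟩ := grid_mem_iff.1 hz
  obtain ⟨a', b', rfl⟩ := grid_mem_iff.1 hz'
  have heq : (((a : ℝ) + s : ℝ) : ℂ) * v₁ + (((b : ℝ) + t : ℝ) : ℂ) * v₂ =
      (((a' : ℝ) + s' : ℝ) : ℂ) * v₁ + (((b' : ℝ) + t' : ℝ) : ℂ) * v₂ := by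
    push_cast
    have := hup.trans hup'.symm
    linear_combination this
  obtain ⟨h1, h2⟩ := coords_unique hω heq
  have ha : a = a' := by
    have h3 : |((a - a' : ℤ) : ℝ)| < 1 := by
      push_cast
      rw [abs_lt]
      constructor <;> [linarith [hs.2, hs'.1]; linarith [hs.1, hs'.2]]
    have : |a - a'| < 1 := by exact_mod_cast h3
    have := Int.abs_lt_one_iff.1 this
    omega
  have hb : b = b' := by
    have h3 : |((b - b' : ℤ) : ℝ)| < 1 := by
      push_cast
      rw [abs_lt]
      constructor <;> [linarith [ht.2, ht'.1]; linarith [ht.1, ht'.2]]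
    have : |b - b'| < 1 := by exact_mod_cast h3
    have := Int.abs_lt_one_iff.1 this
    omega
  exact hne (by rw [ha, hb])

/-- Key per-strip counting lemma. -/
lemma strip_card {z₀ v₁ v₂ : ℂ} (hω : omg v₁ v₂ ≠ 0) (A M : ℝ) (hM : 0 ≤ M)
    (F : Finset ℂ)
    (hF : ∀ z ∈ F, z ∈ gridSet z₀ v₁ v₂ ∧ z.re ∈ Set.Icc A (A + 1) ∧ |z.im| ≤ M) :
    (F.card : ℝ) * |omg v₁ v₂| ≤
      (1 + 2 * Metric.diam (para v₁ v₂)) * (2 * (M + Metric.diam (para v₁ v₂))) := by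
  set d := Metric.diam (para v₁ v₂) with hd
  have hd0 : 0 ≤ d := Metric.diam_nonneg
  set Rfat : Set ℂ := {u : ℂ | u.re ∈ Set.Icc (A - d) (A + 1 + d) ∧
    u.im ∈ Set.Icc (-(M + d)) (M + d)} with hRfat
  have hsub : ∀ z ∈ F, trans v₁ v₂ z ⊆ Rfat := by
    rintro z hzF u ⟨p, hp, rfl⟩
    obtain ⟨_, hre, him⟩ := hF z hzF
    have hpabs : ‖p‖ ≤ d := abs_le_diam_of_mem_para (paraHO_subset_para _ _ hp)
    have hpre : |p.re| ≤ d := le_trans (Complex.abs_re_le_norm p) hpabs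
    have hpim : |p.im| ≤ d := le_trans (Complex.abs_im_le_norm p) hpabs
    rw [abs_le] at hpre hpim him
    constructor
    · simp only [Complex.add_re, Set.mem_Icc]
      constructor <;> [linarith [hre.1, hpre.1]; linarith [hre.2, hpre.2]]
    · simp only [Complex.add_im, Set.mem_Icc]
      constructor <;> [linarith [him.1, hpim.1]; linarith [him.2, hpim.2]]
  have hdisj : (F : Set ℂ).PairwiseDisjoint (trans v₁ v₂) := by
    intro z hz z' hz' hne
    exact trans_disjoint hω (hF z (by simpa using hz)).1 (hF z' (by simpa using hz')).1 hne
  have hmeas := measure_biUnion_finset (μ := volume) hdisj (fun z _ => trans_measurable hω z)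
  have hunion : (⋃ z ∈ F, trans v₁ v₂ z) ⊆ Rfat := by
    simp only [Set.iUnion_subset_iff]
    exact hsub
  have hRvol : volume Rfat = ENNReal.ofReal (1 + 2 * d) * ENNReal.ofReal (2 * (M + d)) := by
    rw [hRfat, volume_rect]
    congr 1 <;> congr 1 <;> ring
  have hchain : (F.card : ENNReal) * ENNReal.ofReal |omg v₁ v₂| ≤
      ENNReal.ofReal (1 + 2 * d) * ENNReal.ofReal (2 * (M + d)) := by
    calc (F.card : ENNReal) * ENNReal.ofReal |omg v₁ v₂|
        = ∑ z ∈ F, volume (trans v₁ v₂ z) := by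
          simp [volume_trans, Finset.sum_const, nsmul_eq_mul]
      _ = volume (⋃ z ∈ F, trans v₁ v₂ z) := hmeas.symm
      _ ≤ volume Rfat := measure_mono hunion
      _ = _ := hRvol
  have hofReal : ENNReal.ofReal ((F.card : ℝ) * |omg v₁ v₂|) ≤
      ENNReal.ofReal ((1 + 2 * d) * (2 * (M + d))) := by
    rw [ENNReal.ofReal_mul (by positivity), ENNReal.ofReal_mul (by positivity)]
    simpa [ENNReal.ofReal_natCast] using hchain
  have h1 : (0 : ℝ) ≤ (1 + 2 * d) * (2 * (M + d)) := by positivity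
  exact (ENNReal.ofReal_le_ofReal_iff h1).1 hofReal


lemma omg_left_coeff (v₁ v₂ : ℂ) (a b : ℤ) :
    omg ((a : ℂ) * v₁ + (b : ℂ) * v₂) v₂ = (a : ℝ) * omg v₁ v₂ := by
  simp only [omg, Complex.add_re, Complex.add_im, Complex.mul_re, Complex.mul_im,
    Complex.intCast_re, Complex.intCast_im]
  ring

lemma omg_right_coeff (v₁ v₂ : ℂ) (a b : ℤ) :
    omg ((a : ℂ) * v₁ + (b : ℂ) * v₂) v₁ = -((b : ℝ) * omg v₁ v₂) := by
  simp only [omg, Complex.add_re, Complex.add_im, Complex.mul_re, Complex.mul_im,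
    Complex.intCast_re, Complex.intCast_im]
  ring

lemma grid_ball_finite (z₀ w₁ w₂ : ℂ) (hω : omg w₁ w₂ ≠ 0) (R : ℝ) :
    (gridSet z₀ w₁ w₂ ∩ Metric.ball 0 R).Finite := by
  set C : ℝ := (R + ‖z₀‖) * (‖w₁‖ + ‖w₂‖) / |omg w₁ w₂| with hC
  have hωpos : 0 < |omg w₁ w₂| := abs_pos.2 hω
  apply Set.Finite.subset
    ((Set.finite_Icc (-⌈C⌉, -⌈C⌉) (⌈C⌉, ⌈C⌉)).image
      (fun p : ℤ × ℤ => z₀ + ((p.1 : ℂ) * w₁ + (p.2 : ℂ) * w₂)))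
  rintro z ⟨hzg, hzb⟩
  obtain ⟨a, b, rfl⟩ := grid_mem_iff.1 hzg
  have habs : ‖(a : ℂ) * w₁ + (b : ℂ) * w₂‖ < R + ‖z₀‖ := by
    have h1 : ‖z₀ + ((a : ℂ) * w₁ + (b : ℂ) * w₂)‖ < R := by
      simpa [Complex.dist_eq] using hzb
    calc ‖(a : ℂ) * w₁ + (b : ℂ) * w₂‖
        = ‖z₀ + ((a : ℂ) * w₁ + (b : ℂ) * w₂) + (-z₀)‖ := by ring_nf
      _ ≤ ‖z₀ + ((a : ℂ) * w₁ + (b : ℂ) * w₂)‖ + ‖-z₀‖ :=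
          norm_add_le _ _
      _ < R + ‖z₀‖ := by simp; linarith
  have hbound : ∀ c : ℤ, |(c : ℝ)| * |omg w₁ w₂| ≤
      ‖(a : ℂ) * w₁ + (b : ℂ) * w₂‖ * (‖w₁‖ + ‖w₂‖) →
      c ∈ Set.Icc (-⌈C⌉) ⌈C⌉ := by
    intro c hc
    have h2 : |(c : ℝ)| ≤ C := by
      rw [hC, le_div_iff₀ hωpos]
      calc |(c : ℝ)| * |omg w₁ w₂| ≤
          ‖(a : ℂ) * w₁ + (b : ℂ) * w₂‖ * (‖w₁‖ + ‖w₂‖) := hc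
        _ ≤ (R + ‖z₀‖) * (‖w₁‖ + ‖w₂‖) := by
            apply mul_le_mul_of_nonneg_right habs.le
            positivity
    rw [abs_le] at h2
    constructor
    · have : -(⌈C⌉ : ℝ) ≤ (c : ℝ) := le_trans (by linarith [Int.le_ceil C]) h2.1
      exact_mod_cast this
    · have : (c : ℝ) ≤ (⌈C⌉ : ℝ) := le_trans h2.2 (Int.le_ceil C)
      exact_mod_cast this
  refine ⟨(a, b), ?_, rfl⟩
  rw [Set.mem_Icc]
  have ha := hbound a ?_
  have hb := hbound b ?_
  · exact ⟨⟨ha.1, hb.1⟩, ⟨ha.2, hb.2⟩⟩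
  · -- bound for b
    have := abs_omg_le ((a : ℂ) * w₁ + (b : ℂ) * w₂) w₁
    rw [omg_right_coeff, abs_neg, abs_mul] at this
    calc |(b : ℝ)| * |omg w₁ w₂| ≤ ‖(a : ℂ) * w₁ + (b : ℂ) * w₂‖ *
          ‖w₁‖ := this
      _ ≤ _ := by
          apply mul_le_mul_of_nonneg_left _ (by positivity)
          simp [le_add_iff_nonneg_right]
  · -- bound for a
    have := abs_omg_le ((a : ℂ) * w₁ + (b : ℂ) * w₂) w₂
    rw [omg_left_coeff, abs_mul] at this
    calc |(a : ℝ)| * |omg w₁ w₂| ≤ ‖(a : ℂ) * w₁ + (b : ℂ) * w₂‖ *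
          ‖w₂‖ := this
      _ ≤ _ := by
          apply mul_le_mul_of_nonneg_left _ (by positivity)
          simp [le_add_iff_nonneg_left]


end Aux13

/-- Counting grid points near the graph tube `L_g` of a nonnegative piecewise continuous
function `g`. -/
theorem stmt_13 (z₀ w₁ w₂ : ℂ) (hindep : LinearIndependent ℝ ![w₁, w₂])
    (g : ℝ → ℝ) (hg0 : ∀ x : ℝ, 0 ≤ x → 0 ≤ g x) (hgpc : PiecewiseCont g)
    (N : ℕ) :
    (gridSet z₀ w₁ w₂ ∩ Metric.ball 0 (N : ℝ) ∩
        {z : ℂ | 0 ≤ z.re ∧ |z.im| ≤ g z.re}).Finite ∧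
    ((gridSet z₀ w₁ w₂ ∩ Metric.ball 0 (N : ℝ) ∩
        {z : ℂ | 0 ≤ z.re ∧ |z.im| ≤ g z.re}).ncard : ℝ) ≤
      4 * ∑ x ∈ Finset.Icc 1 N,
        (1 + fundDiam w₁ w₂) * (sSup (g '' Set.Icc ((x : ℝ) - 1) (x : ℝ)) + fundDiam w₁ w₂) /
          covol w₁ w₂ := by
  classical
  have hω : Aux13.omg w₁ w₂ ≠ 0 := Aux13.omg_ne_zero hindep
  have hcv : covol w₁ w₂ = |Aux13.omg w₁ w₂| := Aux13.covol_eq w₁ w₂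
  have hcovpos : 0 < covol w₁ w₂ := by rw [hcv]; exact abs_pos.2 hω
  set S := gridSet z₀ w₁ w₂ ∩ Metric.ball 0 (N : ℝ) ∩
      {z : ℂ | 0 ≤ z.re ∧ |z.im| ≤ g z.re} with hS
  have hfin : S.Finite :=
    (Aux13.grid_ball_finite z₀ w₁ w₂ hω N).subset (fun z hz => hz.1)
  refine ⟨hfin, ?_⟩
  set D := fundDiam w₁ w₂ with hD
  set dSet : Set ℝ := {d : ℝ | ∃ v₁ v₂ : ℂ,
    latSet v₁ v₂ = latSet w₁ w₂ ∧ d = Metric.diam (para v₁ v₂)} with hdSet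
  have hDeq : D = sInf dSet := rfl
  have hdne : dSet.Nonempty := ⟨Metric.diam (para w₁ w₂), w₁, w₂, rfl, rfl⟩
  have hD0 : 0 ≤ D := by
    rw [hDeq]
    apply le_csInf hdne
    rintro d ⟨v₁, v₂, -, rfl⟩
    exact Metric.diam_nonneg
  set M : ℕ → ℝ := fun x => sSup (g '' Set.Icc ((x : ℝ) - 1) (x : ℝ)) with hMdef
  have hM0 : ∀ x ∈ Finset.Icc 1 N, 0 ≤ M x := by
    intro x hx
    rw [Finset.mem_Icc] at hx
    have hx1 : (1 : ℝ) ≤ (x : ℝ) := by exact_mod_cast hx.1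
    have hmem : (x : ℝ) - 1 ∈ Set.Icc ((x : ℝ) - 1) (x : ℝ) := by
      constructor <;> linarith
    have := le_csSup (hgpc ((x : ℝ) - 1) (x : ℝ)).1 (Set.mem_image_of_mem g hmem)
    exact le_trans (hg0 _ (by linarith)) this
  set F := hfin.toFinset with hF
  have hncard : S.ncard = F.card := Set.ncard_eq_toFinset_card S hfin
  set P : ℕ → ℂ → Prop := fun x z => ((x : ℝ) - 1) ≤ z.re ∧ z.re < (x : ℝ) with hP
  have hcover : F ⊆ (Finset.Icc 1 N).biUnion (fun x => F.filter (P x)) := by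
    intro z hz
    have hzS : z ∈ S := (Set.Finite.mem_toFinset hfin).1 hz
    have h0re : 0 ≤ z.re := hzS.2.1
    have hlt : z.re < (N : ℝ) := by
      have hb : ‖z‖ < (N : ℝ) := by
        simpa [Complex.dist_eq] using hzS.1.2
      exact lt_of_le_of_lt (Complex.re_le_norm z) hb
    have hfl0 : 0 ≤ ⌊z.re⌋ := Int.floor_nonneg.2 h0re
    set x : ℕ := ⌊z.re⌋.toNat + 1 with hx
    have hxcast : (x : ℝ) = (⌊z.re⌋ : ℝ) + 1 := by
      have h' : ((⌊z.re⌋.toNat : ℤ) : ℝ) = ((⌊z.re⌋ : ℤ) : ℝ) := by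
        exact_mod_cast congrArg (fun n : ℤ => (n : ℝ)) (Int.toNat_of_nonneg hfl0)
      rw [hx]
      push_cast at h' ⊢
      linarith
    refine Finset.mem_biUnion.2 ⟨x, ?_, Finset.mem_filter.2 ⟨hz, ?_, ?_⟩⟩
    · rw [Finset.mem_Icc]
      refine ⟨by omega, ?_⟩
      have hfloorN : ⌊z.re⌋ < (N : ℤ) := by
        rw [Int.floor_lt]
        exact_mod_cast hlt
      omega
    · rw [hxcast]
      push_cast
      linarith [Int.floor_le z.re]
    · rw [hxcast]
      linarith [Int.lt_floor_add_one z.re]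
  have hcardle : (F.card : ℝ) ≤ ∑ x ∈ Finset.Icc 1 N, ((F.filter (P x)).card : ℝ) := by
    have h1 : F.card ≤ ∑ x ∈ Finset.Icc 1 N, (F.filter (P x)).card :=
      le_trans (Finset.card_le_card hcover) (Finset.card_biUnion_le)
    exact_mod_cast h1
  have key : ∀ ε : ℝ, 0 < ε → (S.ncard : ℝ) * covol w₁ w₂ ≤
      ∑ x ∈ Finset.Icc 1 N, (1 + 2 * (D + ε)) * (2 * (M x + (D + ε))) := by
    intro ε hε
    have hsInf : sInf dSet < D + ε := by rw [← hDeq]; linarith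
    obtain ⟨d', hd'mem, hd'lt⟩ := exists_lt_of_csInf_lt hdne hsInf
    obtain ⟨v₁, v₂, hlat, rfl⟩ := hd'mem
    obtain ⟨hvomg_eq, hvomg_ne⟩ := Aux13.covol_invariant hlat hω
    have hgrid_eq : gridSet z₀ w₁ w₂ = gridSet z₀ v₁ v₂ := by
      unfold gridSet; rw [hlat]
    have hdd0 : 0 ≤ Metric.diam (para v₁ v₂) := Metric.diam_nonneg
    have hstrip : ∀ x ∈ Finset.Icc 1 N,
        ((F.filter (P x)).card : ℝ) * |Aux13.omg w₁ w₂| ≤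
        (1 + 2 * (D + ε)) * (2 * (M x + (D + ε))) := by
      intro x hx
      have hb := Aux13.strip_card (z₀ := z₀) hvomg_ne ((x : ℝ) - 1) (M x) (hM0 x hx)
        (F.filter (P x)) ?_
      · calc ((F.filter (P x)).card : ℝ) * |Aux13.omg w₁ w₂|
            = ((F.filter (P x)).card : ℝ) * |Aux13.omg v₁ v₂| := by rw [hvomg_eq]
          _ ≤ (1 + 2 * Metric.diam (para v₁ v₂)) *
              (2 * (M x + Metric.diam (para v₁ v₂))) := hb
          _ ≤ (1 + 2 * (D + ε)) * (2 * (M x + (D + ε))) := by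
              nlinarith [hM0 x hx, hdd0, hd'lt]
      · intro z hzf
        obtain ⟨hzF, hPz⟩ := Finset.mem_filter.1 hzf
        have hzS : z ∈ S := (Set.Finite.mem_toFinset hfin).1 hzF
        refine ⟨hgrid_eq ▸ hzS.1.1, ⟨hPz.1, by linarith [hPz.2]⟩, ?_⟩
        have h1 : |z.im| ≤ g z.re := hzS.2.2
        have h2 : g z.re ≤ M x :=
          le_csSup (hgpc ((x : ℝ) - 1) (x : ℝ)).1
            (Set.mem_image_of_mem g ⟨hPz.1, hPz.2.le⟩)
        linarith
    calc (S.ncard : ℝ) * covol w₁ w₂ = (F.card : ℝ) * |Aux13.omg w₁ w₂| := by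
          rw [hncard, hcv]
      _ ≤ (∑ x ∈ Finset.Icc 1 N, ((F.filter (P x)).card : ℝ)) * |Aux13.omg w₁ w₂| :=
          mul_le_mul_of_nonneg_right hcardle (abs_nonneg _)
      _ = ∑ x ∈ Finset.Icc 1 N, ((F.filter (P x)).card : ℝ) * |Aux13.omg w₁ w₂| :=
          Finset.sum_mul _ _ _
      _ ≤ _ := Finset.sum_le_sum hstrip
  set f : ℝ → ℝ := fun t => ∑ x ∈ Finset.Icc 1 N, (1 + 2 * t) * (2 * (M x + t)) with hf
  have hcont : Continuous f := by
    apply continuous_finset_sum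
    intro x _
    fun_prop
  have htends : Tendsto (fun ε => f (D + ε)) (𝓝[>] (0 : ℝ)) (𝓝 (f D)) := by
    have h1 : Tendsto (fun ε : ℝ => D + ε) (𝓝 (0 : ℝ)) (𝓝 D) := by
      have h2 : Continuous (fun ε : ℝ => D + ε) := by fun_prop
      simpa using h2.tendsto (0 : ℝ)
    exact (hcont.tendsto D).comp (h1.mono_left nhdsWithin_le_nhds)
  have hlim : (S.ncard : ℝ) * covol w₁ w₂ ≤ f D := by
    apply ge_of_tendsto htends
    filter_upwards [self_mem_nhdsWithin] with ε hε
    exact key ε hε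
  have hTeq : 4 * ∑ x ∈ Finset.Icc 1 N, (1 + D) * (M x + D) / covol w₁ w₂ =
      (∑ x ∈ Finset.Icc 1 N, 4 * ((1 + D) * (M x + D))) / covol w₁ w₂ := by
    rw [Finset.sum_div, Finset.mul_sum]
    exact Finset.sum_congr rfl fun x _ => by ring
  have hgoal : (S.ncard : ℝ) ≤
      4 * ∑ x ∈ Finset.Icc 1 N, (1 + D) * (M x + D) / covol w₁ w₂ := by
    rw [hTeq, le_div_iff₀ hcovpos]
    calc (S.ncard : ℝ) * covol w₁ w₂ ≤ f D := hlim
      _ ≤ ∑ x ∈ Finset.Icc 1 N, 4 * ((1 + D) * (M x + D)) := by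
          apply Finset.sum_le_sum
          intro x hx
          nlinarith [hM0 x hx, hD0]
  exact hgoal
end
end

section
/- Fix α ∈ (0,1), a ℤ-grid Λ in ℂ with underlying ℤ-lattice Λ⃗, and φ, ψ : ℕ → (0,∞) with φ(N) → ∞ and ψ(N) = (N^{2−α}/φ(N))². Let f : ℂ → ℂ be continuously differentiable with compact support and A > 1 with supp f ⊆ D(0,A). Then, as N → ∞, uniformly in N', N'' ∈ ℕ with N'+N'' ≥ 1, ℛ^{α,Λ,lvl}_{N,N',N''}(f) = ℛ^{α,Λ,+}_{N,N',N''}(f) + ℛ^{α,Λ,−}_{N,N',N''}(f) + O_{α,Λ}( (N ‖f‖_∞ / ψ(N)) · ( (A N^{1−α}/φ(N)) + 1 )² ), with implied constant depending only on α and Λ. -/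
open Filter Topology MeasureTheory

noncomputable section

/-- The index set `I_N^+` (for `pos = true`) resp. `I_N^−` (for `pos = false`): pairs
`(m,p) ∈ Λ × (Λ⃗∖{0})` with `0 < |m|, |m+p| ≤ N` and `θ(m+p) > θ(m)` resp.
`θ(m+p) < θ(m)`. -/
def Ipm (pos : Bool) (z₀ w₁ w₂ : ℂ) (N : ℕ) : Set (ℂ × ℂ) :=
  {q : ℂ × ℂ | q.1 ∈ gridSet z₀ w₁ w₂ ∧ q.2 ∈ latSet w₁ w₂ ∧ q.2 ≠ 0 ∧
    0 < ‖q.1‖ ∧ ‖q.1‖ ≤ (N : ℝ) ∧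
    0 < ‖q.1 + q.2‖ ∧ ‖q.1 + q.2‖ ≤ (N : ℝ) ∧
    (if pos then levelArg 0 q.1 < levelArg 0 (q.1 + q.2)
      else levelArg 0 (q.1 + q.2) < levelArg 0 q.1)}

/-- Evaluation on `f` of the measure `ℛ^{α,Λ,+}_{N,N',N''}` (for `pos = true`) resp.
`ℛ^{α,Λ,−}_{N,N',N''}` (for `pos = false`). -/
def Rpm (pos : Bool) (α : ℝ) (z₀ w₁ w₂ : ℂ) (φ ψ : ℕ → ℝ) (N N' N'' : ℕ) (f : ℂ → ℂ) : ℂ :=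
  (((((N' + N'' : ℕ) : ℝ) * ψ N)⁻¹ : ℝ) : ℂ) *
    ∑ k ∈ Finset.Ico (-(N' : ℤ)) ((N'' : ℕ) : ℤ),
      ∑' q : (Ipm pos z₀ w₁ w₂ N),
        f (((φ N : ℝ) : ℂ) * (levelPow α k (q.1.1 + q.1.2) - levelPow α k q.1.1))

/-- `‖f‖_∞`. -/
def supNorm (f : ℂ → ℂ) : ℝ := ⨆ z : ℂ, ‖f z‖

section aux
variable {z₀ w₁ w₂ : ℂ}

lemma aux_D_ne (hindep : LinearIndependent ℝ ![w₁, w₂]) :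
    ((starRingEnd ℂ) w₁ * w₂).im ≠ 0 := by
  intro hD
  rw [LinearIndependent.pair_iff] at hindep
  have hD' : w₁.re * w₂.im - w₁.im * w₂.re = 0 := by
    simpa [Complex.mul_im, sub_eq_add_neg] using hD
  have h1 : w₂.im • w₁ + (-w₁.im) • w₂ = 0 := by
    apply Complex.ext <;> simp [Complex.smul_re, Complex.smul_im] <;> nlinarith
  obtain ⟨h2, h3⟩ := hindep _ _ h1
  have h3 : w₁.im = 0 := by linarith [neg_eq_zero.mp h3]
  have h4 : w₂.re • w₁ + (-w₁.re) • w₂ = 0 := by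
    apply Complex.ext <;> simp [Complex.smul_re, Complex.smul_im, h2, h3] <;> nlinarith
  obtain ⟨h5, h6⟩ := hindep _ _ h4
  have h6 : w₁.re = 0 := by linarith [neg_eq_zero.mp h6]
  exact one_ne_zero ((hindep 1 0 (by simp [Complex.ext_iff, h3, h6])).1)

/-- The norm-comparison constant. -/
def Kc (w₁ w₂ : ℂ) : ℝ :=
  (‖w₁‖ + ‖w₂‖) / |((starRingEnd ℂ) w₁ * w₂).im|

lemma aux_coord_bound (hindep : LinearIndependent ℝ ![w₁, w₂]) (a b : ℝ) :
    |a| + |b| ≤ Kc w₁ w₂ * ‖(a : ℂ) * w₁ + (b : ℂ) * w₂‖ := by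
  set D := ((starRingEnd ℂ) w₁ * w₂).im with hDdef
  have hD : D ≠ 0 := aux_D_ne hindep
  set z : ℂ := (a : ℂ) * w₁ + (b : ℂ) * w₂ with hz
  have hb : ((starRingEnd ℂ) w₁ * z).im = b * D := by
    simp [hz, hDdef, Complex.mul_im, Complex.add_im, Complex.add_re, Complex.mul_re]
    ring
  have ha : ((starRingEnd ℂ) w₂ * z).im = -(a * D) := by
    simp [hz, hDdef, Complex.mul_im, Complex.add_im, Complex.add_re, Complex.mul_re]
    ring
  have hb' : |b| * |D| ≤ ‖w₁‖ * ‖z‖ := by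
    calc |b| * |D| = |((starRingEnd ℂ) w₁ * z).im| := by rw [hb, abs_mul]
    _ ≤ ‖(starRingEnd ℂ) w₁ * z‖ := Complex.abs_im_le_norm _
    _ = ‖w₁‖ * ‖z‖ := by rw [norm_mul, Complex.norm_conj]
  have ha' : |a| * |D| ≤ ‖w₂‖ * ‖z‖ := by
    calc |a| * |D| = |((starRingEnd ℂ) w₂ * z).im| := by rw [ha, abs_neg, abs_mul]
    _ ≤ ‖(starRingEnd ℂ) w₂ * z‖ := Complex.abs_im_le_norm _
    _ = ‖w₂‖ * ‖z‖ := by rw [norm_mul, Complex.norm_conj]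
  have hDpos : 0 < |D| := abs_pos.mpr hD
  rw [Kc, div_mul_eq_mul_div, le_div_iff₀ hDpos]
  nlinarith [norm_nonneg z]

lemma aux_K_pos (hindep : LinearIndependent ℝ ![w₁, w₂]) : 0 < Kc w₁ w₂ := by
  have hw : w₁ ≠ 0 := fun h =>
    one_ne_zero ((LinearIndependent.pair_iff.mp hindep 1 0 (by simp [h])).1)
  exact div_pos (add_pos_of_pos_of_nonneg ((norm_pos_iff.mpr hw)) (norm_nonneg _))
    (abs_pos.mpr (aux_D_ne hindep))

lemma aux_lat_lb (hindep : LinearIndependent ℝ ![w₁, w₂]) {p : ℂ}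
    (hp : p ∈ latSet w₁ w₂) (hne : p ≠ 0) : 1 ≤ Kc w₁ w₂ * ‖p‖ := by
  obtain ⟨a, b, rfl⟩ := hp
  have hne2 : ¬(a = 0 ∧ b = 0) := by rintro ⟨rfl, rfl⟩; simp at hne
  have h1 : (1:ℝ) ≤ |(a : ℝ)| + |(b : ℝ)| := by
    rcases Classical.em (a = 0) with h | h
    · have hb : b ≠ 0 := fun hb => hne2 ⟨h, hb⟩
      have : (1:ℝ) ≤ |(b : ℝ)| := by
        rw [← Int.cast_abs]; exact_mod_cast Int.one_le_abs hb
      have h0 : (0:ℝ) ≤ |(a : ℝ)| := abs_nonneg _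
      linarith
    · have : (1:ℝ) ≤ |(a : ℝ)| := by
        rw [← Int.cast_abs]; exact_mod_cast Int.one_le_abs h
      have h0 : (0:ℝ) ≤ |(b : ℝ)| := abs_nonneg _
      linarith
  calc (1:ℝ) ≤ |(a : ℝ)| + |(b : ℝ)| := h1
  _ ≤ Kc w₁ w₂ * ‖((a:ℝ) : ℂ) * w₁ + ((b:ℝ) : ℂ) * w₂‖ := aux_coord_bound hindep a b
  _ = Kc w₁ w₂ * ‖(a : ℂ) * w₁ + (b : ℂ) * w₂‖ := by push_cast; ring_nf

lemma lat_sub {p p' : ℂ} (hp : p ∈ latSet w₁ w₂) (hp' : p' ∈ latSet w₁ w₂) :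
    p - p' ∈ latSet w₁ w₂ := by
  obtain ⟨a, b, rfl⟩ := hp; obtain ⟨a', b', rfl⟩ := hp'
  exact ⟨a - a', b - b', by push_cast; ring⟩

lemma grid_sub_grid {m m' : ℂ} (hm : m ∈ gridSet z₀ w₁ w₂) (hm' : m' ∈ gridSet z₀ w₁ w₂) :
    m - m' ∈ latSet w₁ w₂ := by
  obtain ⟨p, hp, rfl⟩ := hm; obtain ⟨p', hp', rfl⟩ := hm'
  have := lat_sub hp hp'
  simpa [add_sub_add_left_eq_sub] using this

lemma grid_add_lat {m p : ℂ} (hm : m ∈ gridSet z₀ w₁ w₂) (hp : p ∈ latSet w₁ w₂) :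
    m + p ∈ gridSet z₀ w₁ w₂ := by
  obtain ⟨q, ⟨a, b, rfl⟩, rfl⟩ := hm; obtain ⟨a', b', rfl⟩ := hp
  exact ⟨((a:ℂ) * w₁ + (b:ℂ) * w₂) + ((a':ℂ) * w₁ + (b':ℂ) * w₂),
    ⟨a + a', b + b', by push_cast; ring⟩, by ring⟩

lemma aux_grid_sep (hindep : LinearIndependent ℝ ![w₁, w₂]) {m m' : ℂ}
    (hm : m ∈ gridSet z₀ w₁ w₂) (hm' : m' ∈ gridSet z₀ w₁ w₂) (hne : m ≠ m') :
    1 ≤ Kc w₁ w₂ * ‖m - m'‖ :=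
  aux_lat_lb hindep (grid_sub_grid hm hm') (sub_ne_zero.mpr hne)

end aux

section aux2
variable {z₀ w₁ w₂ : ℂ}

lemma int_abs_le_floor {a : ℤ} {x : ℝ} (h : |(a:ℝ)| ≤ x) :
    a ∈ Finset.Icc (-⌊x⌋) ⌊x⌋ := by
  rw [Finset.mem_Icc]
  rw [abs_le] at h
  refine ⟨?_, Int.le_floor.mpr h.2⟩
  rw [neg_le]
  exact Int.le_floor.mpr (by push_cast; linarith [h.1])

/-- Finset of lattice points of norm at most `L`. -/
def latFinset (w₁ w₂ : ℂ) (L : ℝ) : Finset ℂ :=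
  (Finset.Icc (-⌊Kc w₁ w₂ * L⌋) ⌊Kc w₁ w₂ * L⌋ ×ˢ
    Finset.Icc (-⌊Kc w₁ w₂ * L⌋) ⌊Kc w₁ w₂ * L⌋).image
    fun ab => (ab.1 : ℂ) * w₁ + (ab.2 : ℂ) * w₂

lemma mem_latFinset (hindep : LinearIndependent ℝ ![w₁, w₂]) {p : ℂ} {L : ℝ}
    (hp : p ∈ latSet w₁ w₂) (hL : ‖p‖ ≤ L) : p ∈ latFinset w₁ w₂ L := by
  obtain ⟨a, b, rfl⟩ := hp
  have hco : |(a:ℝ)| + |(b:ℝ)| ≤ Kc w₁ w₂ * L := by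
    calc |(a:ℝ)| + |(b:ℝ)|
        ≤ Kc w₁ w₂ * ‖((a:ℝ):ℂ) * w₁ + ((b:ℝ):ℂ) * w₂‖ :=
          aux_coord_bound hindep a b
      _ = Kc w₁ w₂ * ‖(a:ℂ) * w₁ + (b:ℂ) * w₂‖ := by norm_num
      _ ≤ Kc w₁ w₂ * L := mul_le_mul_of_nonneg_left hL (aux_K_pos hindep).le
  have h0a := abs_nonneg (a:ℝ)
  have h0b := abs_nonneg (b:ℝ)
  refine Finset.mem_image.mpr ⟨(a, b), Finset.mem_product.mpr ⟨?_, ?_⟩, rfl⟩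
  · exact int_abs_le_floor (by linarith)
  · exact int_abs_le_floor (by linarith)

lemma latFinset_card {L : ℝ} (hKL : 0 ≤ Kc w₁ w₂ * L) :
    ((latFinset w₁ w₂ L).card : ℝ) ≤ (2 * (Kc w₁ w₂ * L) + 1) ^ 2 := by
  set M := ⌊Kc w₁ w₂ * L⌋ with hM
  have hM0 : 0 ≤ M := Int.floor_nonneg.mpr hKL
  have hMle : (M : ℝ) ≤ Kc w₁ w₂ * L := Int.floor_le _
  have hcard : (latFinset w₁ w₂ L).card ≤ ((2 * M + 1).toNat) ^ 2 := by
    refine (Finset.card_image_le).trans ?_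
    rw [Finset.card_product, Int.card_Icc]
    have : M + 1 - -M = 2 * M + 1 := by ring
    rw [this, sq]
  calc ((latFinset w₁ w₂ L).card : ℝ) ≤ (((2 * M + 1).toNat : ℤ) : ℝ) ^ 2 := by
        exact_mod_cast hcard
    _ = ((2 * M + 1 : ℤ) : ℝ) ^ 2 := by rw [Int.toNat_of_nonneg (by omega)]
    _ ≤ (2 * (Kc w₁ w₂ * L) + 1) ^ 2 := by
        have hM0' : (0:ℝ) ≤ (M : ℝ) := by exact_mod_cast hM0
        have h1 : (0:ℝ) ≤ ((2 * M + 1 : ℤ) : ℝ) := by push_cast; linarith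
        have h2 : ((2 * M + 1 : ℤ) : ℝ) ≤ 2 * (Kc w₁ w₂ * L) + 1 := by push_cast; linarith
        exact pow_le_pow_left₀ h1 h2 2

/-- Finset containing the grid points of norm at most `r`. -/
def gridFinset (z₀ w₁ w₂ : ℂ) (r : ℝ) : Finset ℂ :=
  (latFinset w₁ w₂ (r + ‖z₀‖)).image fun p => z₀ + p

lemma mem_gridFinset (hindep : LinearIndependent ℝ ![w₁, w₂]) {m : ℂ} {r : ℝ}
    (hm : m ∈ gridSet z₀ w₁ w₂) (hr : ‖m‖ ≤ r) :
    m ∈ gridFinset z₀ w₁ w₂ r := by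
  obtain ⟨p, hp, rfl⟩ := hm
  refine Finset.mem_image.mpr ⟨p, mem_latFinset hindep hp ?_, rfl⟩
  calc ‖p‖ = ‖z₀ + p - z₀‖ := by ring_nf
    _ ≤ ‖z₀ + p‖ + ‖z₀‖ := by
        simpa using norm_sub_le (z₀ + p) z₀
    _ ≤ r + ‖z₀‖ := by linarith

end aux2

section aux3

lemma levelArg_congr (k : ℤ) {z w : ℂ} (h : Complex.arg z = Complex.arg w) :
    levelArg k z = levelArg k w := by unfold levelArg; rw [h]

lemma arg_eq_of_levelArg_eq {z w : ℂ} (h : levelArg 0 z = levelArg 0 w) :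
    Complex.arg z = Complex.arg w := by
  unfold levelArg at h
  set x := Complex.arg z
  set y := Complex.arg w
  have hπ : 0 < Real.pi := Real.pi_pos
  have hx1 : -Real.pi < x := Complex.neg_pi_lt_arg z
  have hx2 : x ≤ Real.pi := Complex.arg_le_pi z
  have hy1 : -Real.pi < y := Complex.neg_pi_lt_arg w
  have hy2 : y ≤ Real.pi := Complex.arg_le_pi w
  set n : ℤ := ⌊(x - 2 * Real.pi * (0:ℤ)) / (2 * Real.pi)⌋ - ⌊(y - 2 * Real.pi * (0:ℤ)) / (2 * Real.pi)⌋ with hn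
  have hxy : x - y = 2 * Real.pi * (n : ℝ) := by
    rw [hn]; push_cast; linarith [h]
  have habs : |(n:ℝ)| < 1 := by
    rw [abs_lt]
    constructor <;> nlinarith
  have hn0 : n = 0 := by
    have h1 : |n| < 1 := by exact_mod_cast (by rwa [← Int.cast_abs] at habs : ((|n|:ℤ):ℝ) < 1)
    rcases abs_lt.mp h1 with ⟨h2, h3⟩
    omega
  rw [hn0] at hxy; push_cast at hxy; linarith

lemma abs_levelPow_sub_of_arg_eq (β : ℝ) (k : ℤ) {z w : ℂ} (h : Complex.arg z = Complex.arg w) :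
    ‖levelPow β k z - levelPow β k w‖
      = |‖z‖ ^ β - ‖w‖ ^ β| := by
  unfold levelPow
  rw [levelArg_congr k h, ← sub_mul, norm_mul, ← Complex.ofReal_sub, Complex.norm_real, Real.norm_eq_abs]
  have : ‖Complex.exp (Complex.I * (β * levelArg k w))‖ = 1 := by
    rw [Complex.norm_exp]
    norm_num
  rw [this, mul_one]

lemma aligned_sub_eq {z w : ℂ} (h : Complex.arg z = Complex.arg w) :
    z - w = ((‖z‖ - ‖w‖ : ℝ) : ℂ) * Complex.exp (Complex.arg w * Complex.I) := by
  conv_lhs => rw [← Complex.norm_mul_exp_arg_mul_I z, ← Complex.norm_mul_exp_arg_mul_I w]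
  rw [h]; push_cast; ring

lemma abs_aligned_sub {z w : ℂ} (h : Complex.arg z = Complex.arg w) :
    ‖z - w‖ = |‖z‖ - ‖w‖| := by
  rw [aligned_sub_eq h, norm_mul, Complex.norm_real, Real.norm_eq_abs, Complex.norm_exp_ofReal_mul_I, mul_one]

lemma rpow_gap {a : ℝ} (ha : 0 < a) (ha1 : a ≤ 1) {x y Nr : ℝ} (hx : 0 < x) (hxy : x ≤ y)
    (hyN : y ≤ Nr) : a * Nr ^ (a - 1) * (y - x) ≤ y ^ a - x ^ a := by
  set c : ℝ := a * Nr ^ (a - 1) with hc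
  set h : ℝ → ℝ := fun t => t ^ a - c * t with hh
  have hmono : MonotoneOn h (Set.Icc x y) := by
    apply monotoneOn_of_deriv_nonneg (convex_Icc x y)
    · apply ContinuousOn.sub
      · exact fun t ht => (Real.continuousAt_rpow_const t a
          (Or.inl (ne_of_gt (lt_of_lt_of_le hx ht.1)))).continuousWithinAt
      · exact (continuous_const.mul continuous_id).continuousOn
    · intro t ht
      rw [interior_Icc] at ht
      have h't : 0 < t := hx.trans ht.1
      exact ((Real.hasDerivAt_rpow_const (Or.inl h't.ne')).sub
        ((hasDerivAt_id t).const_mul c)).differentiableAt.differentiableWithinAt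
    · intro t ht
      rw [interior_Icc] at ht
      have h't : 0 < t := hx.trans ht.1
      have hD : HasDerivAt h (a * t ^ (a - 1) - c) t := by
        have := (Real.hasDerivAt_rpow_const (x := t) (p := a) (Or.inl h't.ne')).sub
          ((hasDerivAt_id t).const_mul c)
        simp only [id_eq, mul_one] at this
        exact this
      rw [hD.deriv]
      have hle : Nr ^ (a - 1) ≤ t ^ (a - 1) :=
        Real.rpow_le_rpow_of_nonpos h't (ht.2.le.trans hyN) (by linarith)
      have : c ≤ a * t ^ (a - 1) := by
        rw [hc]; exact mul_le_mul_of_nonneg_left hle ha.le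
      linarith
  have hxy' : h x ≤ h y :=
    hmono (Set.mem_Icc.mpr ⟨le_refl x, hxy⟩) (Set.mem_Icc.mpr ⟨hxy, le_refl y⟩) hxy
  simp only [hh] at hxy'
  nlinarith

end aux3

section aux4
variable {z₀ w₁ w₂ : ℂ}

def Tset (z₀ w₁ w₂ : ℂ) (N : ℕ) : Set (ℂ × ℂ) :=
  {q : ℂ × ℂ | q.1 ∈ gridSet z₀ w₁ w₂ ∧ q.2 ∈ latSet w₁ w₂ ∧ q.2 ≠ 0 ∧
    0 < ‖q.1‖ ∧ ‖q.1‖ ≤ (N : ℝ) ∧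
    0 < ‖q.1 + q.2‖ ∧ ‖q.1 + q.2‖ ≤ (N : ℝ)}

def T0set (z₀ w₁ w₂ : ℂ) (N : ℕ) : Set (ℂ × ℂ) :=
  {q : ℂ × ℂ | q ∈ Tset z₀ w₁ w₂ N ∧ levelArg 0 (q.1 + q.2) = levelArg 0 q.1}

lemma Tset_finite (hindep : LinearIndependent ℝ ![w₁, w₂]) (N : ℕ) :
    (Tset z₀ w₁ w₂ N).Finite := by
  apply Set.Finite.subset
    (Finset.finite_toSet (gridFinset z₀ w₁ w₂ (N:ℝ) ×ˢ latFinset w₁ w₂ (2 * (N:ℝ))))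
  rintro ⟨m, p⟩ ⟨h1, h2, h3, h4, h5, h6, h7⟩
  simp only [Finset.coe_product, Set.mem_prod]
  refine ⟨mem_gridFinset hindep h1 h5, mem_latFinset hindep h2 ?_⟩
  calc ‖p‖ = ‖(m + p) - m‖ := by ring_nf
    _ ≤ ‖m + p‖ + ‖m‖ := by
        simpa using norm_sub_le (m + p) m
    _ ≤ 2 * (N:ℝ) := by linarith

lemma T0set_finite (hindep : LinearIndependent ℝ ![w₁, w₂]) (N : ℕ) :
    (T0set z₀ w₁ w₂ N).Finite :=
  (Tset_finite hindep N).subset fun q hq => hq.1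

lemma T0_param (hq : (⟨m, p⟩ : ℂ × ℂ) ∈ T0set z₀ w₁ w₂ N) :
    ∃ t : ℝ, t ≠ 0 ∧ m = (t : ℂ) * p := by
  obtain ⟨⟨hgrid, hlat, hp0, hm0, hmN, hn0, hnN⟩, harg⟩ := hq
  have hm0' : m ≠ 0 := by
    intro h; rw [h] at hm0; simp at hm0
  have hargeq : Complex.arg (m + p) = Complex.arg m := arg_eq_of_levelArg_eq harg
  have hsub : (m + p) - m = ((‖m + p‖ - ‖m‖ : ℝ) : ℂ) *
      Complex.exp (Complex.arg m * Complex.I) := aligned_sub_eq hargeq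
  have hpm : p = ((‖m + p‖ - ‖m‖ : ℝ) : ℂ) *
      Complex.exp (Complex.arg m * Complex.I) := by
    rw [← hsub]; ring
  set u : ℝ := ‖m + p‖ - ‖m‖ with hu
  have hu0 : u ≠ 0 := by
    intro h
    apply hp0
    rw [hpm, h]; simp
  refine ⟨‖m‖ / u, div_ne_zero (by simpa using hm0') hu0, ?_⟩
  have hmeq : m = ((‖m‖ : ℝ) : ℂ) * Complex.exp (Complex.arg m * Complex.I) :=
    (Complex.norm_mul_exp_arg_mul_I m).symm
  have hu0' : ((u : ℝ) : ℂ) ≠ 0 := Complex.ofReal_ne_zero.mpr hu0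
  have hkey : ((‖m‖ / u : ℝ) : ℂ) * ((u:ℂ) * Complex.exp (Complex.arg m * Complex.I))
      = ((‖m‖ : ℝ) : ℂ) * Complex.exp (Complex.arg m * Complex.I) := by
    push_cast
    field_simp
  rw [hpm, hkey]
  exact hmeq

lemma abs_sub_lt_one_of_floor_eq {x y : ℝ} (h : ⌊x⌋ = ⌊y⌋) : |x - y| < 1 := by
  rw [abs_sub_lt_iff]
  constructor <;>
    linarith [Int.floor_le x, Int.floor_le y, Int.lt_floor_add_one x, Int.lt_floor_add_one y,
      (by exact_mod_cast congrArg (fun n : ℤ => (n:ℝ)) h : ((⌊x⌋:ℝ)) = ((⌊y⌋:ℝ)))]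

lemma card_T1 (hindep : LinearIndependent ℝ ![w₁, w₂]) (N : ℕ) {L : ℝ} (hL : 0 ≤ L) :
    ((((T0set_finite hindep N (z₀ := z₀)).toFinset.filter
        (fun q => ‖q.2‖ ≤ L)).card : ℝ)
      ≤ (2 * (Kc w₁ w₂ * L) + 1) ^ 2 * (2 * (Kc w₁ w₂ * (N:ℝ) + 1))) := by
  set K := Kc w₁ w₂ with hK
  have hKpos : 0 < K := aux_K_pos hindep
  set s := (T0set_finite hindep N (z₀ := z₀)).toFinset.filter (fun q => ‖q.2‖ ≤ L)
    with hs
  set t := latFinset w₁ w₂ L ×ˢ (({0, 1} : Finset ℤ) ×ˢ Finset.Icc 0 ⌊K * (N:ℝ)⌋) with ht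
  have hmem : ∀ q ∈ s, q ∈ (T0set z₀ w₁ w₂ N) ∧ ‖q.2‖ ≤ L := by
    intro q hq
    rw [hs, Finset.mem_filter, Set.Finite.mem_toFinset] at hq
    exact hq
  have hcard : s.card ≤ t.card := by
    apply Finset.card_le_card_of_injOn
      (fun q => (q.2, (if 0 ≤ (q.1 / q.2).re then (1:ℤ) else 0), ⌊K * ‖q.1‖⌋))
    · intro q hq
      obtain ⟨⟨⟨hgrid, hlat, hp0, hm0, hmN, hn0, hnN⟩, harg⟩, hqL⟩ := hmem q hq
      rw [ht, Finset.mem_coe, Finset.mem_product, Finset.mem_product]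
      refine ⟨mem_latFinset hindep hlat hqL, ?_, ?_⟩
      · by_cases h : 0 ≤ (q.1 / q.2).re <;> simp [h]
      · rw [Finset.mem_Icc]
        constructor
        · exact Int.floor_nonneg.mpr (by positivity)
        · exact Int.floor_le_floor (by nlinarith)
    · intro q hq q' hq' heq
      simp only [Prod.mk.injEq] at heq
      obtain ⟨hp, hsgn, hfl⟩ := heq
      obtain ⟨hq0, hqL⟩ := hmem q (by simpa [hs] using hq)
      obtain ⟨hq0', hqL'⟩ := hmem q' (by simpa [hs] using hq')
      obtain ⟨t1, ht1, hm1⟩ := T0_param (m := q.1) (p := q.2) (by exact hq0)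
      obtain ⟨t2, ht2, hm2⟩ := T0_param (m := q'.1) (p := q'.2) (by exact hq0')
      have hp2 : q'.2 = q.2 := hp.symm
      have hpne : q.2 ≠ 0 := hq0.1.2.2.1
      have hre1 : (q.1 / q.2).re = t1 := by
        rw [hm1, mul_div_assoc, div_self hpne, mul_one, Complex.ofReal_re]
      have hre2 : (q'.1 / q'.2).re = t2 := by
        rw [hm2, mul_div_assoc, div_self (hp2 ▸ hpne), mul_one, Complex.ofReal_re]
      rw [hre1, hre2] at hsgn
      have hsame : (0 ≤ t1 ↔ 0 ≤ t2) := by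
        by_cases h1 : 0 ≤ t1 <;> by_cases h2 : 0 ≤ t2 <;> simp [h1, h2] at hsgn ⊢
      have habs1 : ‖q.1‖ = |t1| * ‖q.2‖ := by
        rw [hm1, norm_mul, Complex.norm_real, Real.norm_eq_abs]
      have habs2 : ‖q'.1‖ = |t2| * ‖q.2‖ := by
        rw [hm2, hp2, norm_mul, Complex.norm_real, Real.norm_eq_abs]
      have hflr : |K * ‖q.1‖ - K * ‖q'.1‖| < 1 :=
        abs_sub_lt_one_of_floor_eq hfl
      have htt : |(|t1| - |t2|)| = |t1 - t2| := by
        by_cases h1 : 0 ≤ t1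
        · have h2 : 0 ≤ t2 := hsame.mp h1
          rw [abs_of_nonneg h1, abs_of_nonneg h2]
        · have h2 : ¬ 0 ≤ t2 := fun h => h1 (hsame.mpr h)
          push_neg at h1 h2
          rw [abs_of_neg h1, abs_of_neg h2]
          rw [show -t1 - -t2 = -(t1 - t2) by ring, abs_neg]
      have hdiff : ‖q.1 - q'.1‖ = |(|t1| - |t2|)| * ‖q.2‖ := by
        rw [hm1, hm2, hp2, ← sub_mul, ← Complex.ofReal_sub, norm_mul, Complex.norm_real, Real.norm_eq_abs, htt]
      have heq1 : q.1 = q'.1 := by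
        by_contra hne
        have hsep := aux_grid_sep hindep hq0.1.1 hq0'.1.1 hne
        have : K * ‖q.1 - q'.1‖ < 1 := by
          rw [hdiff]
          calc K * (|(|t1| - |t2|)| * ‖q.2‖)
              = |K * ‖q.1‖ - K * ‖q'.1‖| := by
                rw [habs1, habs2, ← mul_sub, ← sub_mul, abs_mul, abs_mul,
                  abs_of_nonneg hKpos.le, abs_of_nonneg (norm_nonneg q.2)]
                try ring
            _ < 1 := hflr
        linarith
      exact Prod.ext heq1 hp2.symm
  have htcard : (t.card : ℝ) ≤ (2 * (K * L) + 1) ^ 2 * (2 * (K * (N:ℝ) + 1)) := by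
    rw [ht, Finset.card_product, Finset.card_product]
    have h01 : ({0, 1} : Finset ℤ).card = 2 := by decide
    rw [h01, Int.card_Icc]
    have hfl0 : 0 ≤ ⌊K * (N:ℝ)⌋ := Int.floor_nonneg.mpr (by positivity)
    have h1 : ((⌊K * (N:ℝ)⌋ + 1 - 0).toNat : ℝ) ≤ K * (N:ℝ) + 1 := by
      have e := Int.toNat_of_nonneg (show (0:ℤ) ≤ ⌊K * (N:ℝ)⌋ + 1 - 0 by omega)
      calc ((⌊K * (N:ℝ)⌋ + 1 - 0).toNat : ℝ) = ((⌊K * (N:ℝ)⌋ + 1 - 0 : ℤ) : ℝ) := by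
            exact_mod_cast congrArg (fun n : ℤ => (n : ℝ)) e
        _ ≤ K * (N:ℝ) + 1 := by push_cast; linarith [Int.floor_le (K * (N:ℝ))]
    have h2 : ((latFinset w₁ w₂ L).card : ℝ) ≤ (2 * (K * L) + 1) ^ 2 :=
      latFinset_card (by positivity)
    push_cast
    have hnn : (0:ℝ) ≤ ((⌊K * (N:ℝ)⌋ + 1 - 0).toNat : ℝ) := by positivity
    nlinarith [(by positivity : (0:ℝ) ≤ ((latFinset w₁ w₂ L).card : ℝ))]
  calc (s.card : ℝ) ≤ (t.card : ℝ) := by exact_mod_cast hcard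
    _ ≤ _ := htcard

end aux4

section aux5
variable {z₀ w₁ w₂ : ℂ}

def SlvlSet (z₀ w₁ w₂ : ℂ) (N : ℕ) : Set (ℂ × ℂ) :=
  {q : ℂ × ℂ | q.1 ∈ gridSet z₀ w₁ w₂ ∧ q.2 ∈ gridSet z₀ w₁ w₂ ∧ q.1 ≠ q.2 ∧
    0 < ‖q.1‖ ∧ ‖q.1‖ ≤ (N : ℝ) ∧
    0 < ‖q.2‖ ∧ ‖q.2‖ ≤ (N : ℝ)}

lemma Ipm_subset_Tset (pos : Bool) (N : ℕ) : Ipm pos z₀ w₁ w₂ N ⊆ Tset z₀ w₁ w₂ N :=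
  fun q hq => ⟨hq.1, hq.2.1, hq.2.2.1, hq.2.2.2.1, hq.2.2.2.2.1, hq.2.2.2.2.2.1,
    hq.2.2.2.2.2.2.1⟩

lemma Ipm_finite (hindep : LinearIndependent ℝ ![w₁, w₂]) (pos : Bool) (N : ℕ) :
    (Ipm pos z₀ w₁ w₂ N).Finite :=
  (Tset_finite hindep N).subset (Ipm_subset_Tset pos N)

lemma SlvlSet_finite (hindep : LinearIndependent ℝ ![w₁, w₂]) (N : ℕ) :
    (SlvlSet z₀ w₁ w₂ N).Finite := by
  apply Set.Finite.subset
    (Finset.finite_toSet (gridFinset z₀ w₁ w₂ (N:ℝ) ×ˢ gridFinset z₀ w₁ w₂ (N:ℝ)))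
  rintro ⟨n, m⟩ ⟨h1, h2, h3, h4, h5, h6, h7⟩
  simp only [Finset.coe_product, Set.mem_prod]
  exact ⟨mem_gridFinset hindep h1 h5, mem_gridFinset hindep h2 h7⟩

lemma Tset_eq_union (hindep : LinearIndependent ℝ ![w₁, w₂]) (N : ℕ) :
    (Tset_finite hindep N (z₀ := z₀)).toFinset =
      ((Ipm_finite hindep true N (z₀ := z₀)).toFinset
          ∪ (Ipm_finite hindep false N (z₀ := z₀)).toFinset)
        ∪ (T0set_finite hindep N (z₀ := z₀)).toFinset := by
  ext q
  simp only [Set.Finite.mem_toFinset, Finset.mem_union]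
  constructor
  · intro hq
    obtain ⟨h1, h2, h3, h4, h5, h6, h7⟩ := hq
    rcases lt_trichotomy (levelArg 0 (q.1 + q.2)) (levelArg 0 q.1) with h | h | h
    · exact Or.inl (Or.inr ⟨h1, h2, h3, h4, h5, h6, h7, by simpa using h⟩)
    · exact Or.inr ⟨⟨h1, h2, h3, h4, h5, h6, h7⟩, h⟩
    · exact Or.inl (Or.inl ⟨h1, h2, h3, h4, h5, h6, h7, by simpa using h⟩)
  · rintro ((h | h) | h)
    · exact Ipm_subset_Tset true N h
    · exact Ipm_subset_Tset false N h
    · exact h.1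

lemma Tset_disj1 (hindep : LinearIndependent ℝ ![w₁, w₂]) (N : ℕ) :
    Disjoint ((Ipm_finite hindep true N (z₀ := z₀)).toFinset)
      ((Ipm_finite hindep false N (z₀ := z₀)).toFinset) := by
  rw [Finset.disjoint_left]
  intro q hq hq'
  rw [Set.Finite.mem_toFinset] at hq hq'
  have h1 := hq.2.2.2.2.2.2.2
  have h2 := hq'.2.2.2.2.2.2.2
  simp only [if_true, if_false] at h1 h2
  exact absurd h2 (by simpa using lt_asymm h1)

lemma Tset_disj2 (hindep : LinearIndependent ℝ ![w₁, w₂]) (N : ℕ) :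
    Disjoint (((Ipm_finite hindep true N (z₀ := z₀)).toFinset)
        ∪ ((Ipm_finite hindep false N (z₀ := z₀)).toFinset))
      ((T0set_finite hindep N (z₀ := z₀)).toFinset) := by
  rw [Finset.disjoint_left]
  intro q hq hq'
  rw [Finset.mem_union] at hq
  rw [Set.Finite.mem_toFinset] at hq'
  have heq := hq'.2
  rcases hq with h | h <;> rw [Set.Finite.mem_toFinset] at h <;>
    have := h.2.2.2.2.2.2.2 <;> simp -failIfUnchanged only [if_true, if_false] at this
  · exact absurd heq (by simpa using ne_of_gt this)
  · exact absurd heq (by simpa using ne_of_lt this)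

lemma sum_split (hindep : LinearIndependent ℝ ![w₁, w₂]) (N : ℕ) (G : ℂ × ℂ → ℂ) :
    ∑ q ∈ (SlvlSet_finite hindep N (z₀ := z₀)).toFinset, G q
      = ∑ q ∈ (Ipm_finite hindep true N (z₀ := z₀)).toFinset, G (q.1 + q.2, q.1)
        + ∑ q ∈ (Ipm_finite hindep false N (z₀ := z₀)).toFinset, G (q.1 + q.2, q.1)
        + ∑ q ∈ (T0set_finite hindep N (z₀ := z₀)).toFinset, G (q.1 + q.2, q.1) := by
  have step1 : ∑ q ∈ (SlvlSet_finite hindep N (z₀ := z₀)).toFinset, G q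
      = ∑ q ∈ (Tset_finite hindep N (z₀ := z₀)).toFinset, G (q.1 + q.2, q.1) := by
    apply Finset.sum_nbij' (fun q => (q.2, q.1 - q.2)) (fun q => (q.1 + q.2, q.1))
    · intro q hq
      rw [Set.Finite.mem_toFinset] at hq ⊢
      obtain ⟨h1, h2, h3, h4, h5, h6, h7⟩ := hq
      refine ⟨h2, grid_sub_grid h1 h2, sub_ne_zero.mpr h3, h6, h7, ?_, ?_⟩
      · rwa [add_sub_cancel]
      · rwa [add_sub_cancel]
    · intro q hq
      rw [Set.Finite.mem_toFinset] at hq ⊢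
      obtain ⟨h1, h2, h3, h4, h5, h6, h7⟩ := hq
      refine ⟨grid_add_lat h1 h2, h1, ?_, h6, h7, h4, h5⟩
      intro h
      exact h3 (by linear_combination h)
    · intro q _; simp
    · intro q _; simp
    · intro q _
      simp only []
      congr 1
      exact Prod.ext (by simp) rfl
  rw [step1, Tset_eq_union hindep N, Finset.sum_union (Tset_disj2 hindep N),
    Finset.sum_union (Tset_disj1 hindep N)]

end aux5

section aux6
variable {z₀ w₁ w₂ : ℂ}

lemma tsum_set_eq_sum {S : Set (ℂ × ℂ)} (hS : S.Finite) (g : ℂ × ℂ → ℂ) :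
    ∑' q : ↥S, g ↑q = ∑ q ∈ hS.toFinset, g q := by
  conv_lhs => rw [← Set.Finite.coe_toFinset hS]
  exact Finset.tsum_subtype _ g

lemma abs_p_le {α : ℝ} (hα : 0 < α) (hα1 : α ≤ 1) {N : ℕ} (hN : 1 ≤ N) {q : ℂ × ℂ}
    (hq : q ∈ T0set z₀ w₁ w₂ N) {c A : ℝ} (hc : 0 < c) (k : ℤ)
    (hne : c * ‖levelPow α k (q.1 + q.2) - levelPow α k q.1‖ < A) :
    ‖q.2‖ ≤ A * (N : ℝ) ^ (1 - α) / (α * c) := by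
  obtain ⟨⟨hgrid, hlat, hp0, hm0, hmN, hn0, hnN⟩, harg⟩ := hq
  have hargeq : Complex.arg (q.1 + q.2) = Complex.arg q.1 := arg_eq_of_levelArg_eq harg
  set x := ‖q.1‖ with hx
  set y := ‖q.1 + q.2‖ with hy
  have habs : ‖levelPow α k (q.1 + q.2) - levelPow α k q.1‖ = |y ^ α - x ^ α| :=
    abs_levelPow_sub_of_arg_eq α k hargeq
  have hq2 : ‖q.2‖ = |y - x| := by
    have := abs_aligned_sub hargeq
    rwa [add_sub_cancel_left] at this
  have hNpos : (0:ℝ) < (N:ℝ) := by exact_mod_cast Nat.lt_of_lt_of_le Nat.zero_lt_one hN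
  have hgap : α * (N:ℝ) ^ (α - 1) * |y - x| ≤ |y ^ α - x ^ α| := by
    rcases le_total x y with h | h
    · rw [abs_of_nonneg (by linarith), abs_of_nonneg
        (sub_nonneg.mpr (Real.rpow_le_rpow (norm_nonneg _) h hα.le))]
      exact rpow_gap hα hα1 hm0 h hnN
    · rw [abs_of_nonpos (by linarith), abs_of_nonpos
        (sub_nonpos.mpr (Real.rpow_le_rpow (norm_nonneg _) h hα.le))]
      have := rpow_gap hα hα1 hn0 h hmN
      linarith
  set t := (N:ℝ) ^ (α - 1) with ht
  have htpos : 0 < t := Real.rpow_pos_of_pos hNpos _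
  have hchain : c * (α * t * ‖q.2‖) < A := by
    rw [hq2]
    calc c * (α * t * |y - x|) ≤ c * |y ^ α - x ^ α| :=
          mul_le_mul_of_nonneg_left (by linarith [hgap]) hc.le
      _ < A := by rwa [habs] at hne
  have hfinal : ‖q.2‖ ≤ A / (α * c * t) := by
    rw [le_div_iff₀ (by positivity)]
    nlinarith
  calc ‖q.2‖ ≤ A / (α * c * t) := hfinal
    _ = A * (N:ℝ) ^ (1 - α) / (α * c) := by
        rw [show (1 - α) = -(α - 1) by ring, Real.rpow_neg hNpos.le, ← ht]
        rw [div_eq_div_iff (by positivity) (by positivity)]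
        field_simp
        try ring

end aux6

/-- The contribution of pairs with aligned arguments is negligible:
`ℛ^{lvl}(f) = ℛ^{+}(f) + ℛ^{−}(f) + O_{α,Λ}((N‖f‖_∞/ψ(N))(AN^{1−α}/φ(N) + 1)²)`. -/
theorem stmt_14 (α : ℝ) (hα : 0 < α ∧ α < 1) (z₀ w₁ w₂ : ℂ)
    (hindep : LinearIndependent ℝ ![w₁, w₂])
    (φ ψ : ℕ → ℝ) (hφpos : ∀ N, 0 < φ N)
    (hφ : Tendsto φ atTop atTop)
    (hψ : ∀ N : ℕ, 1 ≤ N → ψ N = ((N : ℝ) ^ (2 - α) / φ N) ^ 2) :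
    ∃ C : ℝ, 0 < C ∧ ∀ A : ℝ, 1 < A → ∃ N₀ : ℕ, ∀ f : ℂ → ℂ,
      ContDiff ℝ 1 f → HasCompactSupport f → tsupport f ⊆ Metric.ball 0 A →
      ∀ N : ℕ, N₀ ≤ N → ∀ N' N'' : ℕ, 1 ≤ N' + N'' →
        ‖Rlvl α z₀ w₁ w₂ φ ψ N N' N'' f -
            Rpm true α z₀ w₁ w₂ φ ψ N N' N'' f -
            Rpm false α z₀ w₁ w₂ φ ψ N N' N'' f‖ ≤
          C * ((N : ℝ) * supNorm f / ψ N) *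
            (A * (N : ℝ) ^ (1 - α) / φ N + 1) ^ 2 := by

  obtain ⟨hα0, hα1⟩ := hα
  set K := Kc w₁ w₂ with hKdef
  have hKpos : 0 < K := aux_K_pos hindep
  set M : ℝ := max (2 * K / α) 1 with hMdef
  have hM1 : (1:ℝ) ≤ M := le_max_right _ _
  have hM2 : 2 * K / α ≤ M := le_max_left _ _
  refine ⟨2 * (K + 1) * M ^ 2, by positivity, fun A hA => ⟨1, fun f hf hcs hfsupp N hN N' N'' hNN => ?_⟩⟩
  -- basic positivity facts
  have hN1 : (1:ℝ) ≤ (N:ℝ) := by exact_mod_cast hN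
  have hNpos : (0:ℝ) < (N:ℝ) := by linarith
  have hφN : 0 < φ N := hφpos N
  have hψN : 0 < ψ N := by
    rw [hψ N hN]
    have : (0:ℝ) < (N:ℝ) ^ (2 - α) := Real.rpow_pos_of_pos hNpos _
    positivity
  have hNN' : (0:ℝ) < ((N' + N'' : ℕ) : ℝ) := by exact_mod_cast hNN
  -- sup norm facts
  obtain ⟨C₀, hC₀⟩ := hcs.exists_bound_of_continuous hf.continuous
  have hbdd : BddAbove (Set.range fun z => ‖f z‖) := ⟨C₀, by rintro _ ⟨z, rfl⟩; exact hC₀ z⟩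
  have hsup : ∀ z, ‖f z‖ ≤ supNorm f := fun z => le_ciSup hbdd z
  have hsup0 : 0 ≤ supNorm f := le_trans (norm_nonneg (f 0)) (hsup 0)
  have hsupport : ∀ x, f x ≠ 0 → ‖x‖ < A := by
    intro x hx
    have hxmem : x ∈ tsupport f := subset_tsupport f (by exact hx)
    have := hfsupp hxmem
    rwa [Metric.mem_ball, dist_zero_right] at this
  -- the cutoff and B
  set B : ℝ := A * (N:ℝ) ^ (1 - α) / φ N with hBdef
  have hB0 : 0 ≤ B := by
    have : (0:ℝ) < (N:ℝ) ^ (1 - α) := Real.rpow_pos_of_pos hNpos _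
    have hA0 : (0:ℝ) < A := by linarith
    positivity
  set L : ℝ := A * (N:ℝ) ^ (1 - α) / (α * φ N) with hLdef
  have hL0 : 0 ≤ L := by
    have : (0:ℝ) < (N:ℝ) ^ (1 - α) := Real.rpow_pos_of_pos hNpos _
    have hA0 : (0:ℝ) < A := by linarith
    positivity
  -- finsets
  set T0F := (T0set_finite hindep N (z₀ := z₀)).toFinset with hT0F
  set T1 := T0F.filter (fun q => ‖q.2‖ ≤ L) with hT1
  have hT1card : ((T1.card : ℝ)) ≤ (2 * (K * L) + 1) ^ 2 * (2 * (K * (N:ℝ) + 1)) :=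
    card_T1 hindep N hL0
  -- functions
  set G : ℤ → ℂ × ℂ → ℂ :=
    fun k q => f (((φ N : ℝ) : ℂ) * (levelPow α k q.1 - levelPow α k q.2)) with hG
  set g : ℤ → ℂ × ℂ → ℂ := fun k q => G k (q.1 + q.2, q.1) with hg
  -- coefficient
  set c : ℝ := (((N' + N'' : ℕ) : ℝ) * ψ N)⁻¹ with hc
  have hc0 : 0 ≤ c := by positivity
  -- the identity
  have e1 : ∀ k : ℤ,
      (∑' q : {q : ℂ × ℂ // q.1 ∈ gridSet z₀ w₁ w₂ ∧ q.2 ∈ gridSet z₀ w₁ w₂ ∧ q.1 ≠ q.2 ∧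
          0 < ‖q.1‖ ∧ ‖q.1‖ ≤ (N : ℝ) ∧
          0 < ‖q.2‖ ∧ ‖q.2‖ ≤ (N : ℝ)},
        f (((φ N : ℝ) : ℂ) * (levelPow α k q.1.1 - levelPow α k q.1.2)))
      = ∑ q ∈ (SlvlSet_finite hindep N (z₀ := z₀)).toFinset, G k q :=
    fun k => tsum_set_eq_sum (SlvlSet_finite hindep N) (G k)
  have e2 : ∀ (pos : Bool) (k : ℤ),
      (∑' q : (Ipm pos z₀ w₁ w₂ N),
        f (((φ N : ℝ) : ℂ) * (levelPow α k (q.1.1 + q.1.2) - levelPow α k q.1.1)))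
      = ∑ q ∈ (Ipm_finite hindep pos N (z₀ := z₀)).toFinset, g k q :=
    fun pos k => tsum_set_eq_sum (Ipm_finite hindep pos N) (g k)
  have hid : Rlvl α z₀ w₁ w₂ φ ψ N N' N'' f - Rpm true α z₀ w₁ w₂ φ ψ N N' N'' f -
      Rpm false α z₀ w₁ w₂ φ ψ N N' N'' f
      = (c : ℂ) * ∑ k ∈ Finset.Ico (-(N' : ℤ)) ((N'' : ℕ) : ℤ), ∑ q ∈ T0F, g k q := by
    rw [Rlvl, Rpm, Rpm]
    simp only [e1, e2]
    rw [← mul_sub, ← mul_sub, ← Finset.sum_sub_distrib, ← Finset.sum_sub_distrib]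
    congr 1
    apply Finset.sum_congr rfl
    intro k _
    rw [sum_split hindep N (G k)]
    ring
  -- the inner bound
  have hinner : ∀ k : ℤ, ‖∑ q ∈ T0F, g k q‖ ≤ (T1.card : ℝ) * supNorm f := by
    intro k
    have hzero : ∀ q ∈ T0F, q ∉ T1 → ‖g k q‖ = 0 := by
      intro q hqT0 hqT1
      rw [hT1, Finset.mem_filter] at hqT1
      have hnotL : ¬ ‖q.2‖ ≤ L := fun h => hqT1 ⟨hqT0, h⟩
      rw [norm_eq_zero]
      by_contra hne
      apply hnotL
      have hqT0' : q ∈ T0set z₀ w₁ w₂ N := (Set.Finite.mem_toFinset _).mp hqT0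
      have hnorm : φ N * ‖levelPow α k (q.1 + q.2) - levelPow α k q.1‖ < A := by
        have h := hsupport (((φ N : ℝ) : ℂ) * (levelPow α k (q.1 + q.2) - levelPow α k q.1))
          (by exact hne)
        rwa [norm_mul, Complex.norm_real, Real.norm_eq_abs, abs_of_pos hφN]
          at h
      exact abs_p_le hα0 hα1.le hN hqT0' hφN k hnorm
    calc ‖∑ q ∈ T0F, g k q‖ ≤ ∑ q ∈ T0F, ‖g k q‖ := norm_sum_le _ _
      _ = ∑ q ∈ T1, ‖g k q‖ :=
          (Finset.sum_subset (Finset.filter_subset _ _) hzero).symm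
      _ ≤ T1.card • supNorm f := Finset.sum_le_card_nsmul _ _ _ (fun q _ => hsup _)
      _ = (T1.card : ℝ) * supNorm f := by rw [nsmul_eq_mul]
  -- count of k's
  have hkcard : (Finset.Ico (-(N' : ℤ)) ((N'' : ℕ) : ℤ)).card = N' + N'' := by
    rw [Int.card_Ico]; omega
  -- norm bound
  have hbound : ‖Rlvl α z₀ w₁ w₂ φ ψ N N' N'' f - Rpm true α z₀ w₁ w₂ φ ψ N N' N'' f -
      Rpm false α z₀ w₁ w₂ φ ψ N N' N'' f‖
      ≤ (T1.card : ℝ) * supNorm f / ψ N := by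
    rw [hid]
    rw [norm_mul, Complex.norm_real, Real.norm_eq_abs, abs_of_nonneg hc0]
    calc c * ‖∑ k ∈ Finset.Ico (-(N' : ℤ)) ((N'' : ℕ) : ℤ), ∑ q ∈ T0F, g k q‖
        ≤ c * (((N' + N'' : ℕ) : ℝ) * ((T1.card : ℝ) * supNorm f)) := by
          apply mul_le_mul_of_nonneg_left _ hc0
          calc ‖∑ k ∈ Finset.Ico (-(N' : ℤ)) ((N'' : ℕ) : ℤ), ∑ q ∈ T0F, g k q‖
              ≤ ∑ k ∈ Finset.Ico (-(N' : ℤ)) ((N'' : ℕ) : ℤ), ‖∑ q ∈ T0F, g k q‖ :=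
                norm_sum_le _ _
            _ ≤ (Finset.Ico (-(N' : ℤ)) ((N'' : ℕ) : ℤ)).card • ((T1.card : ℝ) * supNorm f) :=
                Finset.sum_le_card_nsmul _ _ _ (fun k _ => hinner k)
            _ = ((N' + N'' : ℕ) : ℝ) * ((T1.card : ℝ) * supNorm f) := by
                rw [hkcard, nsmul_eq_mul]
      _ = (T1.card : ℝ) * supNorm f / ψ N := by
          have h3 : ((N' + N'' : ℕ) : ℝ) * ψ N ≠ 0 := ne_of_gt (mul_pos hNN' hψN)
          rw [hc, eq_div_iff (ne_of_gt hψN)]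
          have h5 : ((N':ℝ) * ψ N + (N'':ℝ) * ψ N) ≠ 0 := by
            have e5 : ((N':ℝ) * ψ N + (N'':ℝ) * ψ N) = ((N' + N'' : ℕ) : ℝ) * ψ N := by
              push_cast; ring
            rw [e5]; exact h3
          field_simp [h5]
          try ring
          try (rw [show ((N':ℝ) * (T1.card:ℝ) * supNorm f * ψ N * (((N':ℝ) * ψ N + (N'':ℝ) * ψ N)⁻¹)
              + (N'':ℝ) * (T1.card:ℝ) * supNorm f * ψ N * (((N':ℝ) * ψ N + (N'':ℝ) * ψ N)⁻¹)
              : ℝ) = ((T1.card:ℝ) * supNorm f) *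
                (((N':ℝ) * ψ N + (N'':ℝ) * ψ N) * (((N':ℝ) * ψ N + (N'':ℝ) * ψ N)⁻¹)) from by
              ring, mul_inv_cancel₀ h5, mul_one])
  -- combine with the counting estimate
  have h2KL : 2 * (K * L) + 1 ≤ M * (B + 1) := by
    have e : 2 * (K * L) = (2 * K / α) * B := by
      rw [hLdef, hBdef]
      field_simp
    nlinarith [mul_le_mul_of_nonneg_right hM2 hB0]
  have hcount : (T1.card : ℝ) ≤ (M * (B + 1)) ^ 2 * (2 * (K + 1) * (N:ℝ)) := by
    have h3 : (2 * (K * L) + 1) ^ 2 ≤ (M * (B + 1)) ^ 2 := by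
      have h0 : (0:ℝ) ≤ 2 * (K * L) + 1 := by positivity
      exact pow_le_pow_left₀ h0 h2KL 2
    have h4 : 2 * (K * (N:ℝ) + 1) ≤ 2 * (K + 1) * (N:ℝ) := by nlinarith
    calc (T1.card : ℝ) ≤ (2 * (K * L) + 1) ^ 2 * (2 * (K * (N:ℝ) + 1)) := hT1card
      _ ≤ (M * (B + 1)) ^ 2 * (2 * (K + 1) * (N:ℝ)) := by
          apply mul_le_mul h3 h4 (by positivity) (by positivity)
  calc ‖Rlvl α z₀ w₁ w₂ φ ψ N N' N'' f - Rpm true α z₀ w₁ w₂ φ ψ N N' N'' f -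
      Rpm false α z₀ w₁ w₂ φ ψ N N' N'' f‖
      ≤ (T1.card : ℝ) * supNorm f / ψ N := hbound
    _ ≤ ((M * (B + 1)) ^ 2 * (2 * (K + 1) * (N:ℝ))) * supNorm f / ψ N := by gcongr
    _ = 2 * (K + 1) * M ^ 2 * ((N : ℝ) * supNorm f / ψ N) * (B + 1) ^ 2 := by
        field_simp
end
end

section
/- Let α = a/b ∈ (0,1) be rational in irreducible form (a, b coprime positive integers, a < b), let p ∈ ℂ*, let R > 0, and let k₀ ∈ ℤ. Let θ(p) ∈ [0,2π) be the representative of arg(p), and for each k ∈ ℤ let C_{p,k} = {z ∈ ℂ* : arg(z) ∈ θ(p) − (1−α)·2π·(k, k+1) + 2πℤ} and C_p = C_{p,0} ∩ {z : |z| ≥ R}. Then there is a finite union of b rays from the origin (a set of Lebesgue measure zero) outside of which the identity Σ_{k=k₀}^{k₀+b−1} 1_{e^{2πikα} C_p}(z) = (b−a) · 1_{{|z| ≥ R}}(z) holds for every z ∈ ℂ; moreover e^{2πikα} C_p = C_{p,k} ∩ {z : |z| ≥ R} for every k. -/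
open Filter Topology MeasureTheory
open scoped Classical

noncomputable section

/-- The open angular sector
`C_{p,k} = {z ∈ ℂ* : arg(z) ∈ θ(p) − (1−α)·2π·(k,k+1) + 2πℤ}`. -/
def Csector (α : ℝ) (p : ℂ) (k : ℤ) : Set ℂ :=
  {z : ℂ | z ≠ 0 ∧ ∃ t : ℝ, (k : ℝ) < t ∧ t < (k : ℝ) + 1 ∧ ∃ j : ℤ,
    levelArg 0 z = levelArg 0 p - (1 - α) * (2 * Real.pi) * t + 2 * Real.pi * (j : ℝ)}

/-- A ray from the origin with direction `e^{iω}`. -/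
def ray (ω : ℝ) : Set ℂ := {w : ℂ | ∃ t : ℝ, 0 < t ∧ w = (t : ℂ) * Complex.exp (Complex.I * (ω : ℂ))}

/-- Auxiliary: the argument of `e^{iψ} w` equals `ψ + arg w` modulo `2π`. -/
lemma aux_argmul (w : ℂ) (hw : w ≠ 0) (ψ : ℝ) :
    ∃ m : ℤ, Complex.arg (Complex.exp ((ψ:ℂ) * Complex.I) * w)
      = ψ + Complex.arg w + 2*Real.pi*m := by
  set z := Complex.exp ((ψ:ℂ) * Complex.I) * w with hzdef
  have hz : z ≠ 0 := mul_ne_zero (Complex.exp_ne_zero _) hw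
  have habs : ‖z‖ = ‖w‖ := by
    simp [hzdef, norm_mul, Complex.norm_exp]
  have h1 : (‖z‖ : ℂ) * Complex.exp (Complex.arg z * Complex.I) = z :=
    Complex.norm_mul_exp_arg_mul_I z
  have h2 : (‖w‖ : ℂ) * Complex.exp (Complex.arg w * Complex.I) = w :=
    Complex.norm_mul_exp_arg_mul_I w
  have h3 : z = (‖w‖ : ℂ) * Complex.exp (((ψ + Complex.arg w : ℝ) : ℂ) * Complex.I) := by
    have e : ((ψ + Complex.arg w : ℝ) : ℂ) * Complex.I
        = (ψ:ℂ) * Complex.I + (Complex.arg w : ℂ) * Complex.I := by push_cast; ring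
    conv_lhs => rw [hzdef, ← h2]
    rw [e, Complex.exp_add]; ring
  rw [habs] at h1
  have habsne : ((‖w‖ : ℝ) : ℂ) ≠ 0 := by
    simpa using hw
  have h4 : Complex.exp ((Complex.arg z : ℂ) * Complex.I)
      = Complex.exp (((ψ + Complex.arg w : ℝ) : ℂ) * Complex.I) :=
    mul_left_cancel₀ habsne (h1.trans h3)
  rw [Complex.exp_eq_exp_iff_exists_int] at h4
  obtain ⟨n, hn⟩ := h4
  refine ⟨n, ?_⟩
  have him := congrArg Complex.im hn
  simp [Complex.add_im, Complex.mul_im, Complex.mul_re] at him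
  linarith

/-- Auxiliary: membership in `Csector` in terms of `arg`. -/
lemma aux_mem_Csector (α : ℝ) (hα : 0 < 1 - α) (p : ℂ) (k : ℤ) (z : ℂ) :
    z ∈ Csector α p k ↔ z ≠ 0 ∧ ∃ j : ℤ,
      (k : ℝ) * ((1 - α) * (2 * Real.pi)) < levelArg 0 p - Complex.arg z + 2 * Real.pi * j ∧
      levelArg 0 p - Complex.arg z + 2 * Real.pi * j < ((k : ℝ) + 1) * ((1 - α) * (2 * Real.pi)) := by
  have hpi := Real.pi_pos
  have hc : 0 < (1 - α) * (2 * Real.pi) := by positivity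
  have hLz : levelArg 0 z = Complex.arg z
      - 2 * Real.pi * (⌊(Complex.arg z - 2 * Real.pi * ((0:ℤ):ℝ)) / (2 * Real.pi)⌋ : ℤ) := rfl
  set F : ℤ := ⌊(Complex.arg z - 2 * Real.pi * ((0:ℤ):ℝ)) / (2 * Real.pi)⌋ with hF
  constructor
  · rintro ⟨hz, t, ht1, ht2, j, hj⟩
    rw [hLz] at hj
    have hb1 := mul_lt_mul_of_pos_right ht1 hc
    have hb2 := mul_lt_mul_of_pos_right ht2 hc
    refine ⟨hz, j + F, ?_, ?_⟩ <;> push_cast <;> nlinarith [hj, hb1, hb2]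
  · rintro ⟨hz, j, h1, h2⟩
    refine ⟨hz, (levelArg 0 p - Complex.arg z + 2 * Real.pi * j) / ((1 - α) * (2 * Real.pi)),
      ?_, ?_, j - F, ?_⟩
    · rw [lt_div_iff₀ hc]; exact h1
    · rw [div_lt_iff₀ hc]; exact h2
    · rw [hLz]
      have hct : (1 - α) * (2 * Real.pi) *
          ((levelArg 0 p - Complex.arg z + 2 * Real.pi * j) / ((1 - α) * (2 * Real.pi)))
          = levelArg 0 p - Complex.arg z + 2 * Real.pi * j := by
        field_simp
      rw [hct]; push_cast; ring

/-- Auxiliary counting lemma: an arithmetic progression of step `σ = bb/n > 1` avoiding the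
integers meets exactly `n` of the `bb` unit intervals `(k, k+1)`, `k₀ ≤ k ≤ k₀ + bb - 1`. -/
lemma aux_count (σ u : ℝ) (hσ : 1 < σ) (n bb : ℕ) (hn : 0 < n) (k₀ : ℤ)
    (hbb : (bb : ℝ) = σ * n)
    (hu : ∀ j k : ℤ, u + σ * j ≠ k) :
    ∑ k ∈ Finset.Icc k₀ (k₀ + (bb:ℤ) - 1),
      (if ∃ j : ℤ, (k:ℝ) < u + σ * j ∧ u + σ * j < (k:ℝ) + 1 then (1:ℝ) else 0) = n := by
  have hσ0 : (0:ℝ) < σ := lt_trans one_pos hσ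
  have hv : u + σ * (((k₀:ℝ) - u) / σ) = k₀ := by field_simp; ring
  set v : ℝ := ((k₀:ℝ) - u) / σ with hvdef
  have hvnotint : ∀ m : ℤ, v ≠ (m:ℝ) := by
    intro m hm
    exact hu m k₀ (by rw [← hm]; exact hv)
  have hfv : (⌊v⌋ : ℝ) < v :=
    lt_of_le_of_ne (Int.floor_le v) (fun h => hvnotint ⌊v⌋ h.symm)
  rw [Finset.sum_boole]
  have hcard : ((Finset.Icc k₀ (k₀ + (bb:ℤ) - 1)).filter
      (fun k : ℤ => ∃ j : ℤ, (k:ℝ) < u + σ * j ∧ u + σ * j < (k:ℝ) + 1)).card = n := by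
    have hbij : (Finset.Icc (⌊v⌋ + 1) (⌊v⌋ + n)).card
        = ((Finset.Icc k₀ (k₀ + (bb:ℤ) - 1)).filter
          (fun k : ℤ => ∃ j : ℤ, (k:ℝ) < u + σ * j ∧ u + σ * j < (k:ℝ) + 1)).card := by
      apply Finset.card_bij (fun (j : ℤ) _ => ⌊u + σ * j⌋)
      · intro j hj
        rw [Finset.mem_Icc] at hj
        set x : ℝ := u + σ * j with hxdef
        have hxlo : (k₀ : ℝ) < x := by
          have hvj : v < (j:ℝ) := by
            have : (⌊v⌋:ℝ) + 1 ≤ (j:ℝ) := by exact_mod_cast hj.1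
            linarith [Int.lt_floor_add_one v]
          have := (mul_lt_mul_iff_right₀ hσ0).2 hvj
          linarith [hv]
        have hxhi : x < (k₀ : ℝ) + bb := by
          have hvj : (j:ℝ) < v + n := by
            have : (j:ℝ) ≤ (⌊v⌋:ℝ) + n := by exact_mod_cast hj.2
            linarith
          have := (mul_lt_mul_iff_right₀ hσ0).2 hvj
          rw [hbb]; nlinarith [hv]
        have hxf1 : (⌊x⌋ : ℝ) < x :=
          lt_of_le_of_ne (Int.floor_le x) (fun h => hu j ⌊x⌋ h.symm)
        have hxf2 : x < (⌊x⌋ : ℝ) + 1 := Int.lt_floor_add_one x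
        rw [Finset.mem_filter, Finset.mem_Icc]
        refine ⟨⟨Int.le_floor.2 (le_of_lt hxlo), ?_⟩, j, hxf1, hxf2⟩
        have : ⌊x⌋ < k₀ + (bb:ℤ) := Int.floor_lt.2 (by push_cast; linarith)
        omega
      · intro j1 hj1 j2 hj2 heq
        by_contra hne
        have key : ∀ i1 i2 : ℤ, i1 < i2 → ⌊u + σ * i1⌋ = ⌊u + σ * i2⌋ → False := by
          intro i1 i2 hlt hfeq
          have hd : (i1:ℝ) + 1 ≤ (i2:ℝ) := by exact_mod_cast hlt
          have hm : σ * ((i1:ℝ) + 1) ≤ σ * i2 := by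
            exact mul_le_mul_of_nonneg_left hd (le_of_lt hσ0)
          have f1 : (⌊u + σ * (i1:ℝ)⌋ : ℝ) ≤ u + σ * i1 := Int.floor_le _
          have f2 : u + σ * (i2:ℝ) < (⌊u + σ * (i2:ℝ)⌋ : ℝ) + 1 := Int.lt_floor_add_one _
          rw [← hfeq] at f2
          have : σ * (i1:ℝ) + σ ≤ σ * i2 := by linarith [hm]
          linarith
        rcases lt_trichotomy j1 j2 with h | h | h
        · exact key j1 j2 h heq
        · exact hne h
        · exact key j2 j1 h heq.symm
      · intro k hk
        rw [Finset.mem_filter, Finset.mem_Icc] at hk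
        obtain ⟨⟨hk1, hk2⟩, j, hj1, hj2⟩ := hk
        refine ⟨j, ?_, ?_⟩
        · rw [Finset.mem_Icc]
          constructor
          · have hvj : v < (j:ℝ) := by
              have hkx : (k₀:ℝ) ≤ (k:ℝ) := by exact_mod_cast hk1
              have : u + σ * v < u + σ * j := by linarith [hv]
              have := lt_of_mul_lt_mul_left (by linarith : σ * v < σ * (j:ℝ)) (le_of_lt hσ0)
              linarith
            have : ⌊v⌋ < j := Int.floor_lt.2 hvj
            omega
          · have hvj : (j:ℝ) < v + n := by
              have hkx : ((k:ℝ) + 1) ≤ (k₀:ℝ) + bb := by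
                have : k + 1 ≤ k₀ + (bb:ℤ) := by omega
                exact_mod_cast this
              have hx : u + σ * j < u + σ * (v + n) := by
                rw [mul_add, ← add_assoc, hv]
                rw [← hbb]
                linarith
              have := lt_of_mul_lt_mul_left (by linarith : σ * (j:ℝ) < σ * (v + n)) (le_of_lt hσ0)
              linarith
            have : (j:ℝ) - n ≤ v := by linarith
            have : j - (n:ℤ) ≤ ⌊v⌋ := Int.le_floor.2 (by push_cast; linarith)
            omega
        · exact Int.floor_eq_iff.2 ⟨le_of_lt hj1, by exact_mod_cast hj2⟩
    rw [← hbij, Int.card_Icc]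
    omega
  rw [hcard]

/-- The directions of the exceptional rays. -/
def rayAngles (θp : ℝ) (b : ℕ) : Fin b → ℝ := fun i => θp - 2 * Real.pi * (i:ℝ) / b

/-- Covering identity in the rational case `α = a/b`: outside of a union of `b` rays from
the origin, `Σ_{k=k₀}^{k₀+b−1} 1_{e^{2πikα}C_p} = (b−a)·1_{{|z|≥R}}`, and moreover
`e^{2πikα}C_p = C_{p,k} ∩ {|z| ≥ R}` for every `k`. -/
theorem stmt_18 (a b : ℕ) (ha : 0 < a) (hab : a < b) (hcop : Nat.Coprime a b)
    (p : ℂ) (hp : p ≠ 0) (R : ℝ) (hR : 0 < R) (k₀ : ℤ) :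
    ∃ ω : Fin b → ℝ,
      (∀ z : ℂ, z ∉ ⋃ i : Fin b, ray (ω i) →
        ∑ k ∈ Finset.Icc k₀ (k₀ + (b : ℤ) - 1),
          (if z ∈ (fun w : ℂ =>
              Complex.exp (((2 * Real.pi * (k : ℝ) * ((a : ℝ) / (b : ℝ)) : ℝ) : ℂ) *
                Complex.I) * w) ''
              (Csector ((a : ℝ) / (b : ℝ)) p 0 ∩ {w : ℂ | R ≤ ‖w‖})
            then (1 : ℝ) else 0) =
          ((b : ℝ) - (a : ℝ)) * (if R ≤ ‖z‖ then (1 : ℝ) else 0)) ∧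
      (∀ k : ℤ, (fun w : ℂ =>
          Complex.exp (((2 * Real.pi * (k : ℝ) * ((a : ℝ) / (b : ℝ)) : ℝ) : ℂ) *
            Complex.I) * w) ''
          (Csector ((a : ℝ) / (b : ℝ)) p 0 ∩ {w : ℂ | R ≤ ‖w‖}) =
        Csector ((a : ℝ) / (b : ℝ)) p k ∩ {w : ℂ | R ≤ ‖w‖}) := by
  classical
  have hpi := Real.pi_pos
  have hbn : 0 < b := lt_trans ha hab
  have hb0 : (0:ℝ) < (b:ℝ) := by exact_mod_cast hbn
  have ha0 : (0:ℝ) < (a:ℝ) := by exact_mod_cast ha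
  have habR : (a:ℝ) < (b:ℝ) := by exact_mod_cast hab
  have hα : 0 < 1 - (a:ℝ)/(b:ℝ) := by
    rw [sub_pos, div_lt_one hb0]; exact habR
  have hc : 0 < (1 - (a:ℝ)/(b:ℝ)) * (2*Real.pi) := by positivity
  set θp : ℝ := levelArg 0 p with hθp
  -- Part 2: image of `C_{p,0} ∩ {|w| ≥ R}` under rotation by `e^{2πikα}`.
  have himg : ∀ k : ℤ, (fun w : ℂ =>
      Complex.exp (((2 * Real.pi * (k : ℝ) * ((a : ℝ) / (b : ℝ)) : ℝ) : ℂ) * Complex.I) * w) ''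
      (Csector ((a : ℝ) / (b : ℝ)) p 0 ∩ {w : ℂ | R ≤ ‖w‖}) =
      Csector ((a : ℝ) / (b : ℝ)) p k ∩ {w : ℂ | R ≤ ‖w‖} := by
    intro k
    ext z
    simp only [Set.mem_image, Set.mem_inter_iff, Set.mem_setOf_eq]
    constructor
    · rintro ⟨w, ⟨hwC, hwR⟩, rfl⟩
      rw [aux_mem_Csector _ hα p 0 w] at hwC
      obtain ⟨hw0, j, hj1, hj2⟩ := hwC
      push_cast at hj1 hj2
      obtain ⟨m, hm⟩ := aux_argmul w hw0 (2 * Real.pi * (k : ℝ) * ((a : ℝ) / (b : ℝ)))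
      have habs : ‖(Complex.exp
          (((2 * Real.pi * (k : ℝ) * ((a : ℝ) / (b : ℝ)) : ℝ) : ℂ) * Complex.I) * w)‖
          = ‖w‖ := by
        rw [norm_mul, Complex.norm_exp]
        simp
      refine ⟨?_, by rw [habs]; exact hwR⟩
      rw [aux_mem_Csector _ hα p k _]
      refine ⟨mul_ne_zero (Complex.exp_ne_zero _) hw0, j + m + k, ?_, ?_⟩ <;>
      · rw [hm]; push_cast; linarith [hj1, hj2]
    · rintro ⟨hzC, hzR⟩
      rw [aux_mem_Csector _ hα p k z] at hzC
      obtain ⟨hz0, j, hj1, hj2⟩ := hzC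
      obtain ⟨m, hm⟩ := aux_argmul z hz0 (-(2 * Real.pi * (k : ℝ) * ((a : ℝ) / (b : ℝ))))
      refine ⟨Complex.exp (((-(2 * Real.pi * (k : ℝ) * ((a : ℝ) / (b : ℝ))) : ℝ) : ℂ)
          * Complex.I) * z, ⟨?_, ?_⟩, ?_⟩
      · rw [aux_mem_Csector _ hα p 0 _]
        refine ⟨mul_ne_zero (Complex.exp_ne_zero _) hz0, j + m - k, ?_, ?_⟩ <;>
        · rw [hm]; push_cast; linarith [hj1, hj2]
      · show R ≤ ‖_‖
        rw [norm_mul, Complex.norm_exp]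
        simpa using hzR
      · show Complex.exp _ * _ = z
        rw [← mul_assoc, ← Complex.exp_add]
        have e0 : ((2 * Real.pi * (k : ℝ) * ((a : ℝ) / (b : ℝ)) : ℝ) : ℂ) * Complex.I +
            ((-(2 * Real.pi * (k : ℝ) * ((a : ℝ) / (b : ℝ))) : ℝ) : ℂ) * Complex.I = 0 := by
          push_cast; ring
        rw [e0, Complex.exp_zero, one_mul]
  -- the exceptional rays
  have hray : ∀ z : ℂ, z ≠ 0 → ∀ j k : ℤ,
      θp - Complex.arg z + 2 * Real.pi * j = (k:ℝ) * ((1 - (a:ℝ)/(b:ℝ)) * (2*Real.pi)) →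
      z ∈ ⋃ i : Fin b, ray (rayAngles θp b i) := by
    intro z hz j k hjk
    set M : ℤ := ((b:ℤ) - (a:ℤ)) * k with hMdef
    have hbZ : (0:ℤ) < (b:ℤ) := by exact_mod_cast hbn
    have hr0 : 0 ≤ M % (b:ℤ) := Int.emod_nonneg M (ne_of_gt hbZ)
    have hrb : M % (b:ℤ) < (b:ℤ) := Int.emod_lt_of_pos M hbZ
    have hqr : (b:ℤ) * (M / (b:ℤ)) + M % (b:ℤ) = M := Int.mul_ediv_add_emod M (b:ℤ)
    have hiub : (M % (b:ℤ)).toNat < b := by omega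
    set i : Fin b := ⟨(M % (b:ℤ)).toNat, hiub⟩ with hidef
    have hir : ((i : ℕ) : ℝ) = ((M % (b:ℤ) : ℤ) : ℝ) := by
      simp only [hidef]
      exact_mod_cast Int.toNat_of_nonneg hr0
    have hkc : (k:ℝ) * ((1 - (a:ℝ)/(b:ℝ)) * (2*Real.pi)) = 2 * Real.pi * ((M:ℝ)) / (b:ℝ) := by
      rw [hMdef]; push_cast; field_simp
    have key : θp - Complex.arg z + 2 * Real.pi * j = 2 * Real.pi * ((M:ℝ)) / (b:ℝ) :=
      hjk.trans hkc
    have hM2 : (M:ℝ) = (b:ℝ) * ((M / (b:ℤ) : ℤ):ℝ) + ((M % (b:ℤ) : ℤ):ℝ) := by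
      exact_mod_cast hqr.symm
    have h3 : 2 * Real.pi * ((M:ℝ)) / (b:ℝ)
        = 2 * Real.pi * ((M / (b:ℤ) : ℤ):ℝ) + 2 * Real.pi * ((M % (b:ℤ) : ℤ):ℝ) / (b:ℝ) := by
      rw [hM2]; field_simp
    have harg : Complex.arg z = rayAngles θp b i
        + 2 * Real.pi * ((j - M / (b:ℤ) : ℤ) : ℝ) := by
      simp only [rayAngles, hir]
      push_cast
      linarith [key, h3]
    refine Set.mem_iUnion.2 ⟨i, ‖z‖, norm_pos_iff.mpr hz, ?_⟩
    have hz2 := Complex.norm_mul_exp_arg_mul_I z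
    have hexp : Complex.exp ((Complex.arg z : ℂ) * Complex.I)
        = Complex.exp (Complex.I * ((rayAngles θp b i : ℝ) : ℂ)) := by
      rw [harg]
      have e : ((rayAngles θp b i + 2 * Real.pi * ((j - M / (b:ℤ) : ℤ) : ℝ) : ℝ) : ℂ) * Complex.I
          = Complex.I * ((rayAngles θp b i : ℝ) : ℂ)
            + ((j - M / (b:ℤ) : ℤ) : ℂ) * (2 * (Real.pi : ℂ) * Complex.I) := by
        push_cast; ring
      rw [e, Complex.exp_add, Complex.exp_int_mul_two_pi_mul_I, mul_one]
    rw [hexp] at hz2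
    exact hz2.symm
  refine ⟨rayAngles θp b, ?_, himg⟩
  intro z hz
  simp only [himg, Set.mem_inter_iff, Set.mem_setOf_eq]
  by_cases hz0 : z = 0
  · have hRz : ¬ R ≤ ‖z‖ := by
      rw [hz0]; simp only [norm_zero]; linarith
    rw [if_neg hRz, mul_zero]
    exact Finset.sum_eq_zero fun k _ => if_neg fun h => hRz h.2
  · by_cases hzR : R ≤ ‖z‖
    · rw [if_pos hzR, mul_one]
      set u : ℝ := (θp - Complex.arg z) / ((1 - (a:ℝ)/(b:ℝ)) * (2*Real.pi)) with hu_def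
      set σ : ℝ := (b:ℝ) / ((b:ℝ) - (a:ℝ)) with hσdef
      have hba : (0:ℝ) < (b:ℝ) - (a:ℝ) := by linarith
      have hσ : 1 < σ := by rw [hσdef, lt_div_iff₀ hba]; linarith
      have hconv : ∀ jj : ℤ, u + σ * jj
          = (θp - Complex.arg z + 2 * Real.pi * jj)
            / ((1 - (a:ℝ)/(b:ℝ)) * (2*Real.pi)) := by
        intro jj; rw [hu_def, hσdef]; field_simp
      have hu : ∀ j k : ℤ, u + σ * j ≠ (k:ℝ) := by
        intro j k heq
        apply hz
        apply hray z hz0 j k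
        rw [hconv j] at heq
        exact (div_eq_iff (ne_of_gt hc)).1 heq
      have hiff : ∀ k : ℤ, ((z ∈ Csector ((a:ℝ)/(b:ℝ)) p k ∧ R ≤ ‖z‖) ↔
          ∃ j : ℤ, (k:ℝ) < u + σ * j ∧ u + σ * j < (k:ℝ) + 1) := by
        intro k
        rw [aux_mem_Csector _ hα p k z]
        constructor
        · rintro ⟨⟨-, j, h1, h2⟩, -⟩
          exact ⟨j, by rw [hconv j, lt_div_iff₀ hc]; exact h1,
                 by rw [hconv j, div_lt_iff₀ hc]; exact h2⟩
        · rintro ⟨j, h1, h2⟩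
          rw [hconv j] at h1 h2
          exact ⟨⟨hz0, j, (lt_div_iff₀ hc).1 h1, (div_lt_iff₀ hc).1 h2⟩, hzR⟩
      rw [Finset.sum_congr rfl fun k _ => if_congr (hiff k) rfl rfl]
      have hbb : (b:ℝ) = σ * ((b - a : ℕ) : ℝ) := by
        rw [hσdef, Nat.cast_sub hab.le]
        exact (div_mul_cancel₀ _ hba.ne').symm
      have hsum := aux_count σ u hσ (b - a) b (by omega) k₀ hbb hu
      have hcast : ((b:ℤ):ℤ) = (b:ℤ) := rfl
      exact hsum.trans (by rw [Nat.cast_sub hab.le])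
    · rw [if_neg hzR, mul_zero]
      exact Finset.sum_eq_zero fun k _ => if_neg fun h => hzR h.2
end
end
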